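/- arXiv:1705.00060 — 8 statements merged into one kernel-verified Lean document; each statement's English description precedes it below -/
import Mathlib

section
/- Let r > 0, 0 < p < 1, and n be a non-negative integer. Let π be the truncated negative binomial probability mass function on {0,1,...,n}. Then for every function g : ℕ → ℝ, the Stein identity holds: ∑_{i=0}^{n} π_i · ( p(r+i)·g(i+1)·1{i < n} − i·g(i) ) = 0. -/
/-- The negative binomial pmf: `P(Z = k)` for `Z ~ NB(r,p)`. -/
noncomputable def nbPmf (r p : ℝ) (k : ℕ) : ℝ :=
  Real.Gamma (r + k) / (Real.Gamma r * k.factorial) * (1 - p) ^ r * p ^ k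

/-- The truncated negative binomial pmf on `{0,...,n}`:
`π_i = P(Z = i) / P(Z ≤ n)` for `Z ~ NB(r,p)`. -/
noncomputable def truncNbPmf (r p : ℝ) (n i : ℕ) : ℝ :=
  nbPmf r p i / ∑ j ∈ Finset.range (n + 1), nbPmf r p j

lemma nb_rec (r p : ℝ) (hr : 0 < r) (i : ℕ) :
    ((i : ℝ) + 1) * nbPmf r p (i + 1) = p * (r + i) * nbPmf r p i := by
  have hri : r + (i : ℝ) ≠ 0 := by positivity
  have hG : Real.Gamma (r + (i + 1 : ℕ)) = (r + i) * Real.Gamma (r + i) := by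
    push_cast
    rw [show r + ((i : ℝ) + 1) = (r + i) + 1 by ring, Real.Gamma_add_one hri]
  have hGr : Real.Gamma r ≠ 0 := Real.Gamma_ne_zero (by intro m; nlinarith [hr, (by positivity : (0:ℝ) ≤ (m:ℝ))])
  have hfact : ((i + 1).factorial : ℝ) = ((i : ℝ) + 1) * i.factorial := by
    rw [Nat.factorial_succ]; push_cast; ring
  have hf0 : (i.factorial : ℝ) ≠ 0 := Nat.cast_ne_zero.mpr i.factorial_ne_zero
  simp only [nbPmf, hG, hfact, pow_succ]
  field_simp

/-- Stein identity for the truncated negative binomial distribution: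
`∑_{i=0}^n π_i (p (r+i) g(i+1) 1{i<n} - i g(i)) = 0` for every `g : ℕ → ℝ`. -/
theorem truncNb_stein_identity (r p : ℝ) (hr : 0 < r) (hp0 : 0 < p) (hp1 : p < 1)
    (n : ℕ) (g : ℕ → ℝ) :
    ∑ i ∈ Finset.range (n + 1),
        truncNbPmf r p n i *
          (p * (r + i) * g (i + 1) * (if i < n then (1 : ℝ) else 0) - i * g i) = 0 := by
  have hS : (0:ℝ) < ∑ j ∈ Finset.range (n + 1), nbPmf r p j := by
    apply Finset.sum_pos
    · intro j _
      have h1 : (0:ℝ) < Real.Gamma (r + j) := Real.Gamma_pos_of_pos (by positivity)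
      have h2 : (0:ℝ) < Real.Gamma r := Real.Gamma_pos_of_pos hr
      have h3 : (0:ℝ) < (1 - p) ^ r := Real.rpow_pos_of_pos (by linarith) r
      have h4 : (0:ℝ) < (j.factorial : ℝ) := by positivity
      unfold nbPmf
      positivity
    · exact ⟨0, Finset.mem_range.mpr (Nat.succ_pos n)⟩
  set S := ∑ j ∈ Finset.range (n + 1), nbPmf r p j with hSdef
  have key : ∑ i ∈ Finset.range (n + 1),
      nbPmf r p i *
        (p * (r + i) * g (i + 1) * (if i < n then (1 : ℝ) else 0) - i * g i) = 0 := by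
    have expand : ∀ i : ℕ, nbPmf r p i *
        (p * (r + i) * g (i + 1) * (if i < n then (1:ℝ) else 0) - i * g i)
        = nbPmf r p i * (p * (r + i) * g (i + 1)) * (if i < n then (1:ℝ) else 0)
          - (i:ℝ) * nbPmf r p i * g i := fun i => by ring
    simp only [expand]
    rw [Finset.sum_sub_distrib, sub_eq_zero]
    have h1 : ∑ i ∈ Finset.range (n + 1),
        nbPmf r p i * (p * (r + i) * g (i + 1)) * (if i < n then (1:ℝ) else 0)
        = ∑ i ∈ Finset.range n, nbPmf r p i * (p * (r + i) * g (i + 1)) := by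
      rw [Finset.sum_range_succ, if_neg (lt_irrefl n), mul_zero, add_zero]
      exact Finset.sum_congr rfl fun i hi => by
        rw [if_pos (Finset.mem_range.mp hi), mul_one]
    rw [h1, Finset.sum_range_succ' (fun i => (i:ℝ) * nbPmf r p i * g i)]
    simp only [Nat.cast_zero, zero_mul, add_zero]
    exact Finset.sum_congr rfl fun i _ => by
      push_cast
      rw [show ((i:ℝ)+1) * nbPmf r p (i+1) * g (i+1)
          = (((i:ℝ)+1) * nbPmf r p (i+1)) * g (i+1) by ring, nb_rec r p hr i]
      ring
  calc ∑ i ∈ Finset.range (n + 1),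
        truncNbPmf r p n i *
          (p * (r + i) * g (i + 1) * (if i < n then (1 : ℝ) else 0) - i * g i)
      = (∑ i ∈ Finset.range (n + 1),
        nbPmf r p i *
          (p * (r + i) * g (i + 1) * (if i < n then (1 : ℝ) else 0) - i * g i)) / S := by
        rw [Finset.sum_div]
        exact Finset.sum_congr rfl fun i _ => by rw [truncNbPmf]; ring
    _ = 0 := by rw [key, zero_div]
end

section
/- Let r > 0, 0 < p < 1, and n be a non-negative integer. Let q be a probability mass function on {0,1,...,n} such that for every function g : ℕ → ℝ one has ∑_{i=0}^{n} q_i · ( p(r+i)·g(i+1)·1{i < n} − i·g(i) ) = 0. Then q equals the truncated negative binomial probability mass function π, i.e., q_i = π_i for all i ∈ {0,1,...,n}. -/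
lemma nbPmf_pos (r p : ℝ) (hr : 0 < r) (hp0 : 0 < p) (hp1 : p < 1) (k : ℕ) :
    0 < nbPmf r p k := by
  unfold nbPmf
  have h1 : (0:ℝ) < Real.Gamma (r + k) := Real.Gamma_pos_of_pos (by positivity)
  have h2 : (0:ℝ) < Real.Gamma r := Real.Gamma_pos_of_pos hr
  have h3 : (0:ℝ) < (1 - p) ^ r := Real.rpow_pos_of_pos (by linarith) r
  have h4 : (0:ℝ) < (k.factorial : ℝ) := by exact_mod_cast k.factorial_pos
  positivity

lemma nbPmf_succ (r p : ℝ) (hr : 0 < r) (k : ℕ) :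
    ((k:ℝ) + 1) * nbPmf r p (k + 1) = p * (r + k) * nbPmf r p k := by
  unfold nbPmf
  have hG : Real.Gamma (r + ((k:ℝ) + 1)) = (r + k) * Real.Gamma (r + k) := by
    rw [show r + ((k:ℝ) + 1) = (r + (k:ℝ)) + 1 by ring,
      Real.Gamma_add_one (by positivity)]
  have hGr : Real.Gamma r ≠ 0 := ne_of_gt (Real.Gamma_pos_of_pos hr)
  have hf : ((k.factorial : ℝ)) ≠ 0 := by exact_mod_cast k.factorial_pos.ne'
  have hk1 : ((k:ℝ) + 1) ≠ 0 := by positivity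
  push_cast [Nat.factorial_succ]
  rw [hG]
  field_simp
  ring

/-- Uniqueness: a pmf on {0,...,n} satisfying the truncated negative binomial Stein
identity for all functions g must be the truncated negative binomial pmf. -/
theorem truncNb_stein_characterization (r p : ℝ) (hr : 0 < r) (hp0 : 0 < p) (hp1 : p < 1)
    (n : ℕ) (q : ℕ → ℝ)
    (hq_nonneg : ∀ i ≤ n, 0 ≤ q i)
    (hq_sum : ∑ i ∈ Finset.range (n + 1), q i = 1)
    (hq_stein : ∀ g : ℕ → ℝ,
      ∑ i ∈ Finset.range (n + 1),
          q i * (p * (r + i) * g (i + 1) * (if i < n then (1 : ℝ) else 0) - i * g i) = 0) :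
    ∀ i ≤ n, q i = truncNbPmf r p n i := by
  set S := ∑ j ∈ Finset.range (n + 1), nbPmf r p j with hS
  have hSpos : 0 < S :=
    Finset.sum_pos (fun j _ => nbPmf_pos r p hr hp0 hp1 j) Finset.nonempty_range_add_one
  have hn0 : 0 < nbPmf r p 0 := nbPmf_pos r p hr hp0 hp1 0
  -- recurrence for q
  have hrec : ∀ k < n, ((k:ℝ) + 1) * q (k + 1) = p * (r + k) * q k := by
    intro k hk
    have h := hq_stein (fun m => if m = k + 1 then 1 else 0)
    have heq : ∀ i ∈ Finset.range (n + 1),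
        q i * (p * (r + i) * (if i + 1 = k + 1 then (1:ℝ) else 0) *
          (if i < n then (1:ℝ) else 0) - i * (if i = k + 1 then (1:ℝ) else 0)) =
        (if i = k then p * (r + k) * q k else 0) -
        (if i = k + 1 then ((k:ℝ) + 1) * q (k + 1) else 0) := by
      intro i _
      by_cases h1 : i = k
      · subst h1
        have : i ≠ i + 1 := (Nat.succ_ne_self i).symm
        simp [hk, this]
        ring
      · by_cases h2 : i = k + 1
        · subst h2
          have h3 : k + 1 + 1 ≠ k + 1 := by omega
          simp [h1, h3]
          push_cast
          ring
        · have h3 : i + 1 ≠ k + 1 := by omega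
          simp [h1, h2, h3]
    rw [Finset.sum_congr rfl heq, Finset.sum_sub_distrib,
      Finset.sum_ite_eq' _ k, Finset.sum_ite_eq' _ (k + 1)] at h
    have hmk : k ∈ Finset.range (n + 1) := Finset.mem_range.2 (by omega)
    have hmk1 : k + 1 ∈ Finset.range (n + 1) := Finset.mem_range.2 (by omega)
    rw [if_pos hmk, if_pos hmk1] at h
    linarith
  -- q i is proportional to nbPmf
  have hform : ∀ i ≤ n, q i * nbPmf r p 0 = q 0 * nbPmf r p i := by
    intro i hi
    induction i with
    | zero => ring
    | succ k ih =>
      have hk : k < n := by omega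
      have ihk := ih (by omega)
      have h1 := hrec k hk
      have h2 := nbPmf_succ r p hr k
      have hk1 : ((k:ℝ) + 1) ≠ 0 := by positivity
      have : ((k:ℝ) + 1) * (q (k + 1) * nbPmf r p 0) =
          ((k:ℝ) + 1) * (q 0 * nbPmf r p (k + 1)) := by
        calc ((k:ℝ) + 1) * (q (k + 1) * nbPmf r p 0)
            = (((k:ℝ) + 1) * q (k + 1)) * nbPmf r p 0 := by ring
          _ = (p * (r + k) * q k) * nbPmf r p 0 := by rw [h1]
          _ = p * (r + k) * (q k * nbPmf r p 0) := by ring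
          _ = p * (r + k) * (q 0 * nbPmf r p k) := by rw [ihk]
          _ = q 0 * (p * (r + k) * nbPmf r p k) := by ring
          _ = q 0 * (((k:ℝ) + 1) * nbPmf r p (k + 1)) := by rw [← h2]
          _ = ((k:ℝ) + 1) * (q 0 * nbPmf r p (k + 1)) := by ring
      exact mul_left_cancel₀ hk1 this
  -- determine q 0
  have hsum2 : nbPmf r p 0 = q 0 * S := by
    have : ∑ i ∈ Finset.range (n + 1), q i * nbPmf r p 0 =
        ∑ i ∈ Finset.range (n + 1), q 0 * nbPmf r p i := by
      refine Finset.sum_congr rfl fun i hi => hform i (by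
        simpa using Nat.lt_succ_iff.mp (Finset.mem_range.mp hi))
    rw [← Finset.sum_mul, hq_sum, one_mul, ← Finset.mul_sum] at this
    exact this
  intro i hi
  have h := hform i hi
  have hq0 : q 0 = nbPmf r p 0 / S := by
    field_simp
    linarith [hsum2]
  rw [hq0] at h
  unfold truncNbPmf
  rw [← hS]
  have hn0' : nbPmf r p 0 ≠ 0 := ne_of_gt hn0
  have hS' : S ≠ 0 := ne_of_gt hSpos
  have h2 : (q i * S) * nbPmf r p 0 = nbPmf r p i * nbPmf r p 0 := by
    field_simp at h
    linear_combination nbPmf r p 0 * h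
  have h3 : q i * S = nbPmf r p i := mul_right_cancel₀ hn0' h2
  field_simp
  linarith [h3]
end

section
/- Let r > 0, 0 < p < 1, and n be a non-negative integer, and let π be the truncated negative binomial probability mass function on {0,1,...,n}. Then for every function f : {0,1,...,n} → ℝ there exists a function g : {0,1,...,n+1} → ℝ with g(0) = 0 and g(n+1) = 0 satisfying the Stein equation p(r+i)·g(i+1)·1{i < n} − i·g(i) = f(i) − ∑_{j=0}^{n} π_j f(j) for every i ∈ {0,1,...,n}. -/
/-- Existence of a solution to the truncated negative binomial Stein equation,
vanishing at 0 and at n+1. -/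
theorem truncNb_stein_equation_solution (r p : ℝ) (hr : 0 < r) (hp0 : 0 < p) (hp1 : p < 1)
    (n : ℕ) (f : ℕ → ℝ) :
    ∃ g : ℕ → ℝ, g 0 = 0 ∧ g (n + 1) = 0 ∧
      ∀ i ≤ n,
        p * (r + i) * g (i + 1) * (if i < n then (1 : ℝ) else 0) - i * g i
          = f i - ∑ j ∈ Finset.range (n + 1), truncNbPmf r p n j * f j := by
  have hpos : ∀ k : ℕ, 0 < nbPmf r p k := by
    intro k
    unfold nbPmf
    have h1 : 0 < Real.Gamma (r + k) := Real.Gamma_pos_of_pos (by positivity)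
    have h2 : 0 < Real.Gamma r := Real.Gamma_pos_of_pos hr
    have h3 : (0:ℝ) < (1 - p) ^ r := Real.rpow_pos_of_pos (by linarith) r
    positivity
  have hT : 0 < ∑ j ∈ Finset.range (n + 1), nbPmf r p j :=
    Finset.sum_pos (fun j _ => hpos j) ⟨0, Finset.mem_range.2 (Nat.succ_pos n)⟩
  set T := ∑ j ∈ Finset.range (n + 1), nbPmf r p j with hTdef
  have hπpos : ∀ i : ℕ, 0 < truncNbPmf r p n i := by
    intro i; unfold truncNbPmf; rw [← hTdef]; exact div_pos (hpos i) hT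
  have hπsum : ∑ j ∈ Finset.range (n + 1), truncNbPmf r p n j = 1 := by
    unfold truncNbPmf
    rw [← Finset.sum_div, ← hTdef, div_self hT.ne']
  have key : ∀ i : ℕ, ((i:ℝ) + 1) * nbPmf r p (i + 1) = p * (r + i) * nbPmf r p i := by
    intro i
    have hri : (r + (i:ℝ)) ≠ 0 := by positivity
    have h1 : Real.Gamma (r + ((i+1 : ℕ):ℝ)) = (r + i) * Real.Gamma (r + i) := by
      rw [show r + ((i+1 : ℕ):ℝ) = (r + i) + 1 by push_cast; ring,
        Real.Gamma_add_one hri]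
    unfold nbPmf
    rw [h1, Nat.factorial_succ, pow_succ]
    have h2 : Real.Gamma r ≠ 0 := (Real.Gamma_pos_of_pos hr).ne'
    have h3 : ((i+1 : ℕ) : ℝ) * (i.factorial : ℝ) ≠ 0 := by positivity
    push_cast
    field_simp
  have keyπ : ∀ i : ℕ, ((i:ℝ) + 1) * truncNbPmf r p n (i + 1)
      = p * (r + i) * truncNbPmf r p n i := by
    intro i
    unfold truncNbPmf
    rw [← hTdef, ← mul_div_assoc, ← mul_div_assoc, key]
  set c := ∑ j ∈ Finset.range (n + 1), truncNbPmf r p n j * f j with hcdef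
  set S : ℕ → ℝ := fun i => ∑ j ∈ Finset.range i, truncNbPmf r p n j * (f j - c) with hSdef
  have hSsucc : ∀ i : ℕ, S (i + 1) = S i + truncNbPmf r p n i * (f i - c) := by
    intro i; simp [hSdef, Finset.sum_range_succ]
  have hStop : S (n + 1) = 0 := by
    simp only [hSdef]
    have : ∀ j ∈ Finset.range (n+1), truncNbPmf r p n j * (f j - c)
        = truncNbPmf r p n j * f j - truncNbPmf r p n j * c := by intros; ring
    rw [Finset.sum_congr rfl this, Finset.sum_sub_distrib, ← Finset.sum_mul, hπsum, ← hcdef]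
    ring
  refine ⟨fun i => if i = 0 then 0 else if i = n + 1 then 0
      else S i / (i * truncNbPmf r p n i), by simp, by simp, ?_⟩
  have hig : ∀ i ≤ n, (i : ℝ) * (if i = 0 then (0:ℝ) else if i = n + 1 then 0
      else S i / (i * truncNbPmf r p n i)) = S i / truncNbPmf r p n i := by
    intro i hi
    rcases Nat.eq_zero_or_pos i with h0 | h0
    · subst h0; simp [hSdef]
    · have h1 : i ≠ 0 := h0.ne'
      have h2 : i ≠ n + 1 := by omega
      rw [if_neg h1, if_neg h2]
      have hci : ((i:ℝ)) ≠ 0 := Nat.cast_ne_zero.2 h1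
      have hne : (i:ℝ) * truncNbPmf r p n i ≠ 0 := by
        exact mul_ne_zero hci (hπpos i).ne'
      rw [mul_div_assoc', div_eq_div_iff hne (hπpos i).ne']
      ring
  intro i hi
  simp only []
  rcases lt_or_eq_of_le hi with hlt | heq
  · -- i < n
    rw [if_pos hlt, mul_one]
    have h1 : i + 1 ≠ 0 := by omega
    have h2 : i + 1 ≠ n + 1 := by omega
    rw [if_neg h1, if_neg h2, hig i hi]
    have hπi := (hπpos i).ne'
    have hπi1 := (hπpos (i+1)).ne'
    have hkey := keyπ i
    have hgoal : p * (r + i) * (S (i+1) / (((i:ℝ) + 1) * truncNbPmf r p n (i + 1)))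
        = S (i+1) / truncNbPmf r p n i := by
      have hne : ((i:ℝ) + 1) * truncNbPmf r p n (i + 1) ≠ 0 := by positivity
      rw [mul_div_assoc', div_eq_div_iff hne hπi, hkey]
      ring
    push_cast
    rw [hgoal, hSsucc i]
    field_simp
    ring
  · -- i = n
    rw [heq, if_neg (lt_irrefl n), mul_zero, hig n le_rfl, zero_sub]
    have hSi : S n = - (truncNbPmf r p n n * (f n - c)) := by
      have := hSsucc n
      rw [hStop] at this
      linarith
    rw [hSi, neg_div, neg_neg, mul_div_cancel_left₀ _ (hπpos n).ne']
end

section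
/- Let r > 0, 0 < p < 1, and n be a non-negative integer, and let π be the truncated negative binomial probability mass function on {0,1,...,n}. For a subset A ⊆ {0,1,...,n}, let g_A : {0,1,...,n+1} → ℝ be the solution of the Stein equation defined by g_A(0) = 0, g_A(i+1) = ( 1_A(i) − π(A) + i·g_A(i) ) / ( p(r+i) ) for 0 ≤ i < n, and g_A(n+1) = 0, where π(A) = ∑_{j ∈ A} π_j. Then max_{0 ≤ i ≤ n} | g_A(i+1) − g_A(i) | ≤ (1 − π_0)/(p·r). -/
/-- The solution of the truncated negative binomial Stein equation for the test function
`f = 1_A`, defined by `g 0 = 0`, the forward recursion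
`g (i+1) = (1_A(i) - π(A) + i g(i)) / (p (r+i))` for `i < n`, and `g (i+1) = 0` for `i ≥ n`
(in particular `g (n+1) = 0`). -/
noncomputable def steinSolNB (r p : ℝ) (n : ℕ) (A : Finset ℕ) : ℕ → ℝ
  | 0 => 0
  | (i + 1) =>
    if i < n then
      ((if i ∈ A then (1 : ℝ) else 0) - ∑ j ∈ A, truncNbPmf r p n j
          + i * steinSolNB r p n A i) / (p * (r + i))
    else 0

namespace TruncNB

open Finset

set_option linter.unusedSectionVars false

/-- An elementary summation identity. -/
theorem ident1 (π : ℕ → ℝ) : ∀ i : ℕ,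
    ∑ j ∈ range i, (((j:ℝ)+1) * π (j+1) + ((i:ℝ)-(j:ℝ)) * π j)
    = (i:ℝ) * ∑ j ∈ range (i+1), π j := by
  intro i
  induction i with
  | zero => simp
  | succ i ih =>
    have step : ∑ j ∈ range (i+1), ((((j:ℝ))+1) * π (j+1) + (((i:ℝ)+1)-(j:ℝ)) * π j)
        = (∑ j ∈ range i, (((j:ℝ)+1) * π (j+1) + ((i:ℝ)-(j:ℝ)) * π j))
          + (∑ j ∈ range i, π j) + (((i:ℝ)+1) * π (i+1) + π i) := by
      rw [Finset.sum_range_succ]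
      rw [show ∑ j ∈ range i, ((((j:ℝ))+1) * π (j+1) + (((i:ℝ)+1)-(j:ℝ)) * π j)
          = ∑ j ∈ range i, ((((j:ℝ)+1) * π (j+1) + ((i:ℝ)-(j:ℝ)) * π j) + π j) from
        Finset.sum_congr rfl (fun j _ => by ring), Finset.sum_add_distrib]
      ring
    have c : ((i+1 : ℕ):ℝ) = (i:ℝ)+1 := by push_cast; ring
    rw [c]
    rw [step, ih, Finset.sum_range_succ π (i+1), Finset.sum_range_succ π i]
    ring

section keys
variable (π : ℕ → ℝ) (p r : ℝ) (n : ℕ) (hp0 : 0 < p) (hp1 : p < 1) (hr : 0 < r)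
  (hpos : ∀ j, 0 < π j)
  (hrec : ∀ j : ℕ, ((j:ℝ)+1) * π (j+1) = p * (r+(j:ℝ)) * π j)
include hp0 hp1 hr hpos hrec

theorem key1 (i : ℕ) :
    p*(r+(i:ℝ)) * ∑ j ∈ range i, π j ≤ (i:ℝ) * ∑ j ∈ range (i+1), π j := by
  rw [← ident1 π i, Finset.mul_sum]
  refine Finset.sum_le_sum (fun j hj => ?_)
  have hj' : (j:ℝ) ≤ (i:ℝ) - 1 := by
    have := Finset.mem_range.mp hj
    have : (j:ℝ) + 1 ≤ (i:ℝ) := by exact_mod_cast this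
    linarith
  have h1 := hrec j
  have h2 := (hpos j).le
  have key : 0 ≤ (1-p) * ((i:ℝ)-(j:ℝ)) * π j :=
    mul_nonneg (mul_nonneg (by linarith) (by linarith)) h2
  nlinarith [key, h1]

theorem key3 (i : ℕ) :
    p*r * ∑ j ∈ range i, π j ≤ (i:ℝ) * ∑ j ∈ Ico 1 (i+1), π j := by
  rw [Finset.sum_Ico_eq_sum_range, Nat.add_sub_cancel, Finset.mul_sum, Finset.mul_sum]
  refine Finset.sum_le_sum (fun j hj => ?_)
  have hj' : (j:ℝ) + 1 ≤ (i:ℝ) := by exact_mod_cast Finset.mem_range.mp hj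
  have h1 := hrec j
  have h2 := (hpos j).le
  have h3 := (hpos (j+1)).le
  calc p * r * π j ≤ p * (r + j) * π j := by
        nlinarith [mul_nonneg (mul_nonneg hp0.le (Nat.cast_nonneg (α := ℝ) j)) h2]
    _ = ((j:ℝ)+1) * π (j+1) := (h1).symm
    _ ≤ (i:ℝ) * π (j+1) := by nlinarith
    _ = (i:ℝ) * π (1+j) := by rw [add_comm 1 j]

theorem key2 (i : ℕ) :
    (i:ℝ) * ∑ j ∈ Ico (i+1) (n+1), π j ≤ p*(r+(i:ℝ)) * ∑ j ∈ Ico i (n+1), π j := by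
  have hsub : p*(r+(i:ℝ)) * ∑ j ∈ Ico i n, π j ≤ p*(r+(i:ℝ)) * ∑ j ∈ Ico i (n+1), π j := by
    refine mul_le_mul_of_nonneg_left ?_ (by positivity)
    refine Finset.sum_le_sum_of_subset_of_nonneg (Finset.Ico_subset_Ico le_rfl (by omega))
      (fun j _ _ => (hpos j).le)
  refine le_trans ?_ hsub
  rw [Finset.sum_Ico_eq_sum_range, Nat.succ_sub_succ, Finset.sum_Ico_eq_sum_range,
    Finset.mul_sum, Finset.mul_sum]
  refine Finset.sum_le_sum (fun j hj => ?_)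
  have h1 := hrec (i+j)
  have h2 := (hpos (i+j)).le
  have cast1 : ((i+j:ℕ):ℝ) = (i:ℝ) + (j:ℝ) := by push_cast; ring
  rw [cast1] at h1
  have e : i+1+j = (i+j)+1 := by omega
  rw [e]
  have hd : (0:ℝ) < (i:ℝ) + (j:ℝ) + 1 := by positivity
  rw [← mul_le_mul_iff_of_pos_right hd]
  calc (i:ℝ) * π ((i+j)+1) * ((i:ℝ)+(j:ℝ)+1) = (i:ℝ) * ((((i:ℝ)+(j:ℝ))+1) * π ((i+j)+1)) := by ring
    _ = (i:ℝ) * (p * (r+((i:ℝ)+(j:ℝ))) * π (i+j)) := by rw [h1]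
    _ ≤ p * (r+(i:ℝ)) * π (i+j) * ((i:ℝ)+(j:ℝ)+1) := by
        have key : 0 ≤ p * (r*(j:ℝ) + r + (i:ℝ)) * π (i+j) :=
          mul_nonneg (mul_nonneg hp0.le (by positivity)) h2
        nlinarith [key]
end keys

variable (r p : ℝ) (n : ℕ)

noncomputable def Fr (i : ℕ) : ℝ := ∑ j ∈ Finset.range i, truncNbPmf r p n j
noncomputable def Bf (i : ℕ) : ℝ := ∑ j ∈ Finset.Ico i (n+1), truncNbPmf r p n j
noncomputable def uNB (i : ℕ) : ℝ := Fr r p n i / (i * truncNbPmf r p n i)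
noncomputable def vNB (i : ℕ) : ℝ := Bf r p n i / (i * truncNbPmf r p n i)

variable (A : Finset ℕ)
noncomputable def chiNB (j : ℕ) : ℝ := if j ∈ A then truncNbPmf r p n j else 0
noncomputable def aPart (i : ℕ) : ℝ := ∑ j ∈ Finset.range i, chiNB r p n A j
noncomputable def bPart (i : ℕ) : ℝ := ∑ j ∈ Finset.Ico i (n+1), chiNB r p n A j
noncomputable def hNB (i : ℕ) : ℝ :=
  ∑ j ∈ Finset.range i,
    ((if j ∈ A then (1:ℝ) else 0) - ∑ k ∈ A, truncNbPmf r p n k) * truncNbPmf r p n j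

section basic
variable (hr : 0 < r) (hp0 : 0 < p) (hp1 : p < 1)
include hr hp0 hp1

lemma nbPmf_pos (k : ℕ) : 0 < nbPmf r p k := by
  unfold nbPmf
  have h1 : 0 < Real.Gamma (r + k) := Real.Gamma_pos_of_pos (by positivity)
  have h2 : 0 < Real.Gamma r := Real.Gamma_pos_of_pos hr
  have h3 : (0:ℝ) < k.factorial := by exact_mod_cast k.factorial_pos
  have h4 : 0 < (1-p)^r := Real.rpow_pos_of_pos (by linarith) r
  positivity

lemma S_pos : 0 < ∑ j ∈ Finset.range (n + 1), nbPmf r p j :=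
  Finset.sum_pos (fun j _ => nbPmf_pos r p hr hp0 hp1 j) (by simp)

lemma pi_pos (i : ℕ) : 0 < truncNbPmf r p n i :=
  div_pos (nbPmf_pos r p hr hp0 hp1 i) (S_pos r p n hr hp0 hp1)

lemma nb_rec (i : ℕ) : ((i:ℝ)+1) * nbPmf r p (i+1) = p * (r+i) * nbPmf r p i := by
  unfold nbPmf
  have h2 : 0 < Real.Gamma r := Real.Gamma_pos_of_pos hr
  have h3 : (0:ℝ) < i.factorial := by exact_mod_cast i.factorial_pos
  have hg : Real.Gamma (r + (i+1:ℕ)) = (r+i) * Real.Gamma (r + i) := by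
    push_cast
    rw [show r + ((i:ℝ)+1) = (r + i) + 1 by ring, Real.Gamma_add_one (by positivity)]
  rw [hg]
  have hf : ((i+1).factorial : ℝ) = (i+1) * i.factorial := by
    push_cast [Nat.factorial_succ]; ring
  rw [hf]
  field_simp
  ring

lemma pi_rec (i : ℕ) :
    ((i:ℝ)+1) * truncNbPmf r p n (i+1) = p * (r+i) * truncNbPmf r p n i := by
  unfold truncNbPmf
  rw [mul_div_assoc', mul_div_assoc', nb_rec r p hr hp0 hp1 i]

lemma Fr_total : Fr r p n (n+1) = 1 := by
  unfold Fr truncNbPmf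
  rw [← Finset.sum_div, div_self (ne_of_gt (S_pos r p n hr hp0 hp1))]

lemma Fr_add_Bf (i : ℕ) (hi : i ≤ n + 1) : Fr r p n i + Bf r p n i = 1 := by
  rw [← Fr_total r p n hr hp0 hp1]
  unfold Fr Bf
  exact Finset.sum_range_add_sum_Ico _ hi

end basic

lemma Fr_succ (i : ℕ) : Fr r p n (i+1) = Fr r p n i + truncNbPmf r p n i :=
  Finset.sum_range_succ _ i

lemma Bf_succ (i : ℕ) (hi : i ≤ n) :
    Bf r p n i = truncNbPmf r p n i + Bf r p n (i+1) :=
  Finset.sum_eq_sum_Ico_succ_bot (Nat.lt_succ_of_le hi) _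

lemma aPart_succ (i : ℕ) : aPart r p n A (i+1) = aPart r p n A i + chiNB r p n A i :=
  Finset.sum_range_succ _ i

lemma bPart_succ (i : ℕ) (hi : i ≤ n) :
    bPart r p n A i = chiNB r p n A i + bPart r p n A (i+1) :=
  Finset.sum_eq_sum_Ico_succ_bot (Nat.lt_succ_of_le hi) _

section withA
variable (hr : 0 < r) (hp0 : 0 < p) (hp1 : p < 1) (hA : A ⊆ Finset.range (n + 1))
include hr hp0 hp1 hA

lemma piA_eq : ∑ k ∈ A, truncNbPmf r p n k = aPart r p n A (n+1) := by
  unfold aPart chiNB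
  rw [Finset.sum_ite_mem, Finset.inter_eq_right.mpr hA]

lemma piA_split (i : ℕ) (hi : i ≤ n+1) :
    ∑ k ∈ A, truncNbPmf r p n k = aPart r p n A i + bPart r p n A i := by
  rw [piA_eq r p n A hr hp0 hp1 hA]
  exact (Finset.sum_range_add_sum_Ico _ hi).symm

lemma hNB_eq (i : ℕ) (hi : i ≤ n+1) :
    hNB r p n A i = aPart r p n A i * Bf r p n i - bPart r p n A i * Fr r p n i := by
  have e1 : hNB r p n A i
      = aPart r p n A i - (∑ k ∈ A, truncNbPmf r p n k) * Fr r p n i := by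
    unfold hNB aPart Fr
    rw [Finset.mul_sum, ← Finset.sum_sub_distrib]
    refine Finset.sum_congr rfl (fun j _ => ?_)
    unfold chiNB
    split <;> ring
  rw [e1, piA_split r p n A hr hp0 hp1 hA i hi]
  have e2 := Fr_add_Bf r p n hr hp0 hp1 i hi
  linear_combination (-(aPart r p n A i)) * e2

lemma gform : ∀ i, i ≤ n+1 →
    steinSolNB r p n A i = hNB r p n A i / ((i:ℝ) * truncNbPmf r p n i) := by
  intro i
  induction i with
  | zero => intro _; simp [steinSolNB, hNB]
  | succ i ih =>
    intro hi
    have hi' : i ≤ n := by omega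
    rcases Nat.lt_or_ge i n with hlt | hge
    · -- recursion case
      have ihv := ih (by omega)
      have hrec := pi_rec r p n hr hp0 hp1 i
      have hπi := pi_pos r p n hr hp0 hp1 i
      have hpr : (0:ℝ) < p * (r + i) := by positivity
      have hs : hNB r p n A (i+1) = hNB r p n A i
          + ((if i ∈ A then (1:ℝ) else 0) - ∑ k ∈ A, truncNbPmf r p n k)
            * truncNbPmf r p n i := Finset.sum_range_succ _ i
      have hcast : (((i+1:ℕ)):ℝ) = (i:ℝ) + 1 := by push_cast; ring
      simp only [steinSolNB, if_pos hlt]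
      rw [ihv, hs, hcast, hrec]
      rcases Nat.eq_zero_or_pos i with h0 | hpos
      · subst h0
        have : hNB r p n A 0 = 0 := by simp [hNB]
        rw [this]
        push_cast
        field_simp
        ring
      · have hiR : (0:ℝ) < (i:ℝ) := by exact_mod_cast hpos
        field_simp
        ring
    · -- i = n : both sides zero
      have hnot : ¬ i < n := by omega
      simp only [steinSolNB, if_neg hnot]
      rw [show i+1 = n+1 from by omega]
      have hz : hNB r p n A (n+1) = 0 := by
        rw [hNB_eq r p n A hr hp0 hp1 hA (n+1) le_rfl]
        have b1 : Bf r p n (n+1) = 0 := by unfold Bf; simp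
        have b2 : bPart r p n A (n+1) = 0 := by unfold bPart; simp
        rw [b1, b2]; ring
      rw [hz, zero_div]

lemma grep (i : ℕ) (hi : i ≤ n+1) :
    steinSolNB r p n A i
      = aPart r p n A i * vNB r p n i - bPart r p n A i * uNB r p n i := by
  rw [gform r p n A hr hp0 hp1 hA i hi, hNB_eq r p n A hr hp0 hp1 hA i hi]
  unfold vNB uNB
  rw [sub_div, mul_div_assoc, mul_div_assoc]

end withA

end TruncNB
-- appended part
namespace TruncNB
open Finset
variable (r p : ℝ) (n : ℕ) (A : Finset ℕ)

section bounds
variable (hr : 0 < r) (hp0 : 0 < p) (hp1 : p < 1)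
include hr hp0 hp1

lemma Fr_nonneg (i : ℕ) : 0 ≤ Fr r p n i :=
  Finset.sum_nonneg fun j _ => (pi_pos r p n hr hp0 hp1 j).le

lemma Bf_nonneg (i : ℕ) : 0 ≤ Bf r p n i :=
  Finset.sum_nonneg fun j _ => (pi_pos r p n hr hp0 hp1 j).le

lemma chi_nonneg (j : ℕ) : 0 ≤ chiNB r p n A j := by
  unfold chiNB; split
  · exact (pi_pos r p n hr hp0 hp1 j).le
  · exact le_rfl

lemma chi_le (j : ℕ) : chiNB r p n A j ≤ truncNbPmf r p n j := by
  unfold chiNB; split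
  · exact le_rfl
  · exact (pi_pos r p n hr hp0 hp1 j).le

lemma aPart_nonneg (i : ℕ) : 0 ≤ aPart r p n A i :=
  Finset.sum_nonneg fun j _ => chi_nonneg r p n A hr hp0 hp1 j

lemma bPart_nonneg (i : ℕ) : 0 ≤ bPart r p n A i :=
  Finset.sum_nonneg fun j _ => chi_nonneg r p n A hr hp0 hp1 j

lemma aPart_le (i : ℕ) : aPart r p n A i ≤ Fr r p n i :=
  Finset.sum_le_sum fun j _ => chi_le r p n A hr hp0 hp1 j

lemma bPart_le (i : ℕ) : bPart r p n A i ≤ Bf r p n i :=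
  Finset.sum_le_sum fun j _ => chi_le r p n A hr hp0 hp1 j

lemma u_nonneg (i : ℕ) : 0 ≤ uNB r p n i := by
  unfold uNB
  exact div_nonneg (Fr_nonneg r p n hr hp0 hp1 i)
    (mul_nonneg (Nat.cast_nonneg i) (pi_pos r p n hr hp0 hp1 i).le)

lemma v_nonneg (i : ℕ) : 0 ≤ vNB r p n i := by
  unfold vNB
  exact div_nonneg (Bf_nonneg r p n hr hp0 hp1 i)
    (mul_nonneg (Nat.cast_nonneg i) (pi_pos r p n hr hp0 hp1 i).le)

lemma u_mono (i : ℕ) : uNB r p n i ≤ uNB r p n (i+1) := by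
  rcases Nat.eq_zero_or_pos i with h0 | hpos
  · subst h0
    have : uNB r p n 0 = 0 := by unfold uNB Fr; simp
    rw [this]
    exact u_nonneg r p n hr hp0 hp1 1
  · have hπi := pi_pos r p n hr hp0 hp1 i
    have hπi1 := pi_pos r p n hr hp0 hp1 (i+1)
    have hiR : (0:ℝ) < (i:ℝ) := by exact_mod_cast hpos
    have hd1 : (0:ℝ) < (i:ℝ) * truncNbPmf r p n i := by positivity
    have hd2 : (0:ℝ) < ((i+1:ℕ):ℝ) * truncNbPmf r p n (i+1) := by positivity
    unfold uNB
    rw [div_le_div_iff₀ hd1 hd2]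
    have hc : ((i+1:ℕ):ℝ) = (i:ℝ) + 1 := by push_cast; ring
    rw [hc, pi_rec r p n hr hp0 hp1 i]
    have hk : p*(r+(i:ℝ)) * Fr r p n i ≤ (i:ℝ) * Fr r p n (i+1) := by
      unfold Fr
      exact key1 (truncNbPmf r p n) p r hp0 hp1 hr
        (pi_pos r p n hr hp0 hp1) (pi_rec r p n hr hp0 hp1) i
    nlinarith [hk, hπi.le, Fr_nonneg r p n hr hp0 hp1 i]

lemma v_anti (i : ℕ) (hpos : 0 < i) : vNB r p n (i+1) ≤ vNB r p n i := by
  have hπi := pi_pos r p n hr hp0 hp1 i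
  have hπi1 := pi_pos r p n hr hp0 hp1 (i+1)
  have hiR : (0:ℝ) < (i:ℝ) := by exact_mod_cast hpos
  have hd1 : (0:ℝ) < (i:ℝ) * truncNbPmf r p n i := by positivity
  have hd2 : (0:ℝ) < ((i+1:ℕ):ℝ) * truncNbPmf r p n (i+1) := by positivity
  unfold vNB
  rw [div_le_div_iff₀ hd2 hd1]
  have hc : ((i+1:ℕ):ℝ) = (i:ℝ) + 1 := by push_cast; ring
  rw [hc, pi_rec r p n hr hp0 hp1 i]
  have hk : (i:ℝ) * Bf r p n (i+1) ≤ p*(r+(i:ℝ)) * Bf r p n i := by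
    unfold Bf
    exact key2 (truncNbPmf r p n) p r n hp0 hp1 hr
      (pi_pos r p n hr hp0 hp1) (pi_rec r p n hr hp0 hp1) i
  nlinarith [hk, hπi.le, Bf_nonneg r p n hr hp0 hp1 (i+1)]

lemma pi_mul_v (i : ℕ) :
    truncNbPmf r p n i * vNB r p n (i+1) = Bf r p n (i+1) / (p*(r+(i:ℝ))) := by
  have hπi := pi_pos r p n hr hp0 hp1 i
  have hπi1 := pi_pos r p n hr hp0 hp1 (i+1)
  have hpr : (0:ℝ) < p * (r + (i:ℝ)) := by positivity
  unfold vNB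
  have hc : ((i+1:ℕ):ℝ) = (i:ℝ) + 1 := by push_cast; ring
  rw [hc, pi_rec r p n hr hp0 hp1 i]
  field_simp

lemma pi_mul_u_le (i : ℕ) :
    truncNbPmf r p n i * uNB r p n i
      ≤ (∑ j ∈ Ico 1 (i+1), truncNbPmf r p n j) / (p*r) := by
  have hpr : (0:ℝ) < p * r := by positivity
  rcases Nat.eq_zero_or_pos i with h0 | hpos
  · subst h0
    have : uNB r p n 0 = 0 := by unfold uNB Fr; simp
    rw [this, mul_zero]
    exact div_nonneg (Finset.sum_nonneg fun j _ => (pi_pos r p n hr hp0 hp1 j).le) hpr.le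
  · have hπi := pi_pos r p n hr hp0 hp1 i
    have hiR : (0:ℝ) < (i:ℝ) := by exact_mod_cast hpos
    have e1 : truncNbPmf r p n i * uNB r p n i = Fr r p n i / (i:ℝ) := by
      unfold uNB
      field_simp
    rw [e1, div_le_div_iff₀ hiR hpr]
    have hk : p*r * Fr r p n i ≤ (i:ℝ) * ∑ j ∈ Ico 1 (i+1), truncNbPmf r p n j := by
      unfold Fr
      exact key3 (truncNbPmf r p n) p r hp0 hp1 hr
        (pi_pos r p n hr hp0 hp1) (pi_rec r p n hr hp0 hp1) i
    linarith [hk]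

lemma M_le (i : ℕ) (hi : i ≤ n) :
    truncNbPmf r p n i * vNB r p n (i+1) + truncNbPmf r p n i * uNB r p n i
      ≤ (1 - truncNbPmf r p n 0) / (p*r) := by
  have hpr : (0:ℝ) < p * r := by positivity
  have h1 := pi_mul_v r p n hr hp0 hp1 i
  have h2 : Bf r p n (i+1) / (p*(r+(i:ℝ))) ≤ Bf r p n (i+1) / (p*r) := by
    gcongr
    · exact Bf_nonneg r p n hr hp0 hp1 (i+1)
    · nlinarith [hp0, Nat.cast_nonneg (α := ℝ) i]
  have h3 := pi_mul_u_le r p n hr hp0 hp1 i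
  have h4 : (∑ j ∈ Ico 1 (i+1), truncNbPmf r p n j) + Bf r p n (i+1) = Bf r p n 1 := by
    unfold Bf
    exact Finset.sum_Ico_consecutive (truncNbPmf r p n) (show 1 ≤ i+1 by omega) (show i+1 ≤ n+1 by omega)
  have h5 : Bf r p n 1 = 1 - truncNbPmf r p n 0 := by
    have := Fr_add_Bf r p n hr hp0 hp1 1 (by omega)
    have hFr1 : Fr r p n 1 = truncNbPmf r p n 0 := by
      unfold Fr; rw [Finset.sum_range_one]
    linarith
  have h6 : Bf r p n (i+1)/(p*r) + (∑ j ∈ Ico 1 (i+1), truncNbPmf r p n j)/(p*r)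
      = (1 - truncNbPmf r p n 0)/(p*r) := by
    rw [← add_div, add_comm, h4, h5]
  linarith

end bounds
end TruncNB

/-- Stein factor bound for the truncated negative binomial distribution:
the first difference of the Stein solution is bounded by `(1 - π₀)/(p r)`. -/
theorem truncNb_stein_factor (r p : ℝ) (hr : 0 < r) (hp0 : 0 < p) (hp1 : p < 1)
    (n : ℕ) (A : Finset ℕ) (hA : A ⊆ Finset.range (n + 1)) :
    ∀ i ≤ n, |steinSolNB r p n A (i + 1) - steinSolNB r p n A i|
      ≤ (1 - truncNbPmf r p n 0) / (p * r) := by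
  intro i hi
  open TruncNB in
  rw [grep r p n A hr hp0 hp1 hA (i+1) (by omega), grep r p n A hr hp0 hp1 hA i (by omega)]
  have ha := TruncNB.aPart_succ r p n A i
  have hb := TruncNB.bPart_succ r p n A i hi
  rw [ha, hb]
  set a := TruncNB.aPart r p n A i with ha'
  set e := TruncNB.chiNB r p n A i with he'
  set b' := TruncNB.bPart r p n A (i+1) with hb'
  set F := TruncNB.Fr r p n i with hF'
  set B' := TruncNB.Bf r p n (i+1) with hB'
  set u := TruncNB.uNB r p n i with hu'
  set u' := TruncNB.uNB r p n (i+1) with hu''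
  set v := TruncNB.vNB r p n i with hv'
  set v' := TruncNB.vNB r p n (i+1) with hv''
  set πi := truncNbPmf r p n i with hπ'
  have hums : u ≤ u' := TruncNB.u_mono r p n hr hp0 hp1 i
  have ha0 : 0 ≤ a := TruncNB.aPart_nonneg r p n A hr hp0 hp1 i
  have haF : a ≤ F := TruncNB.aPart_le r p n A hr hp0 hp1 i
  have hb0 : 0 ≤ b' := TruncNB.bPart_nonneg r p n A hr hp0 hp1 (i+1)
  have hbB : b' ≤ B' := TruncNB.bPart_le r p n A hr hp0 hp1 (i+1)
  have he0 : 0 ≤ e := TruncNB.chi_nonneg r p n A hr hp0 hp1 i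
  have heπ : e ≤ πi := TruncNB.chi_le r p n A hr hp0 hp1 i
  have hu0 : 0 ≤ u := TruncNB.u_nonneg r p n hr hp0 hp1 i
  have hv'0 : 0 ≤ v' := TruncNB.v_nonneg r p n hr hp0 hp1 (i+1)
  have hM : πi * v' + πi * u ≤ (1 - truncNbPmf r p n 0) / (p * r) :=
    TruncNB.M_le r p n hr hp0 hp1 i hi
  -- sign facts about a*(v'-v) and F*(v'-v)
  have hva : a * (v' - v) ≤ 0 ∧ F * (v' - v) ≤ a * (v' - v) := by
    rcases Nat.eq_zero_or_pos i with h0 | hpos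
    · have hA0 : a = 0 := by rw [ha', h0]; unfold TruncNB.aPart; simp
      have hF0 : F = 0 := by rw [hF', h0]; unfold TruncNB.Fr; simp
      rw [hA0, hF0]; simp
    · have hvv : v' - v ≤ 0 := by
        have := TruncNB.v_anti r p n hr hp0 hp1 i hpos
        rw [← hv', ← hv''] at this
        linarith
      exact ⟨mul_nonpos_of_nonneg_of_nonpos ha0 hvv,
        mul_le_mul_of_nonpos_right haF hvv⟩
  have t2 : b' * (u - u') ≤ 0 := mul_nonpos_of_nonneg_of_nonpos hb0 (by linarith)
  have t3 : e * (v' + u) ≤ πi * (v' + u) :=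
    mul_le_mul_of_nonneg_right heπ (by linarith)
  have t5 : B' * (u - u') ≤ b' * (u - u') :=
    mul_le_mul_of_nonpos_right hbB (by linarith)
  have t6 : 0 ≤ e * (v' + u) := mul_nonneg he0 (by linarith)
  -- the symmetry identity
  have hJ : F * v + B' * u' = (TruncNB.Fr r p n (i+1)) * v' + (TruncNB.Bf r p n i) * u := by
    rw [hF', hB', hu', hu'', hv', hv'']
    unfold TruncNB.uNB TruncNB.vNB
    ring
  have hFr1 : TruncNB.Fr r p n (i+1) = F + πi := TruncNB.Fr_succ r p n i
  have hBf1 : TruncNB.Bf r p n i = πi + B' := TruncNB.Bf_succ r p n i hi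
  rw [hFr1, hBf1] at hJ
  have t7 : F * (v' - v) + B' * (u - u') = -(πi * v' + πi * u) := by
    linear_combination -hJ
  have hexp : (a + e) * v' - b' * u' - (a * v - (e + b') * u)
      = a * (v' - v) + e * (v' + u) + b' * (u - u') := by ring
  rw [hexp]
  rw [abs_le]
  constructor
  · linarith [hva.1, hva.2, t5, t6, t7, hM]
  · linarith [hva.1, t2, t3, hM]
end

section
/- Let r > 0, 0 < p < 1, and n be a non-negative integer, and let π be the truncated negative binomial probability mass function on {0,1,...,n}. For A = {0}, let g_A be the Stein solution with g_A(0) = 0, so that g_A(1) = ( 1 − π_0 )/( p·r ) by the Stein equation at i = 0. Then | g_A(1) − g_A(0) | = (1 − π_0)/(p·r); in particular the Stein factor bound (1 − π_0)/(p·r) is attained and hence sharp. -/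
/-- Sharpness of the Stein factor bound: for `A = {0}` the bound `(1 - π₀)/(p r)`
is attained by `|g(1) - g(0)|`. -/
theorem truncNb_stein_factor_sharp (r p : ℝ) (hr : 0 < r) (hp0 : 0 < p) (hp1 : p < 1)
    (n : ℕ) :
    |steinSolNB r p n {0} 1 - steinSolNB r p n {0} 0|
      = (1 - truncNbPmf r p n 0) / (p * r) := by
  have hsum : ∀ m : ℕ, 0 < ∑ j ∈ Finset.range (m + 1), nbPmf r p j := fun m =>
    Finset.sum_pos (fun j _ => nbPmf_pos r p hr hp0 hp1 j) ⟨0, by simp⟩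
  rcases Nat.eq_zero_or_pos n with hn | hn
  · subst hn
    have hπ : truncNbPmf r p 0 0 = 1 := by
      unfold truncNbPmf
      rw [Finset.sum_range_one, div_self (nbPmf_pos r p hr hp0 hp1 0).ne']
    simp [steinSolNB, hπ]
  · have hπlt : truncNbPmf r p n 0 < 1 := by
      unfold truncNbPmf
      rw [div_lt_one (hsum n)]
      have : nbPmf r p 0 = ∑ j ∈ Finset.range 1, nbPmf r p j := by
        rw [Finset.sum_range_one]
      rw [this]
      exact Finset.sum_lt_sum_of_subset
        (Finset.range_subset_range.2 (by omega)) (i := 1) (by simp; omega) (by simp)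
        (nbPmf_pos r p hr hp0 hp1 1) (fun j _ _ => (nbPmf_pos r p hr hp0 hp1 j).le)
    have h1 : steinSolNB r p n {0} 1 = (1 - truncNbPmf r p n 0) / (p * r) := by
      show (if 0 < n then _ else _) = _
      rw [if_pos hn]
      simp [steinSolNB]
    rw [h1, show steinSolNB r p n {0} 0 = 0 from rfl, sub_zero, abs_of_nonneg]
    exact div_nonneg (by linarith) (by positivity)
end

section
/- Let λ > 0 and n be a non-negative integer, and let π be the truncated Poisson probability mass function on {0,1,...,n}. Then for every integer i with 1 ≤ i ≤ n: ( ∑_{j=i+1}^{n} π_j ) / λ + ( ∑_{j=0}^{i-1} π_j ) / i ≤ (1 − π_0)/λ, where the first sum is interpreted as 0 when i = n. -/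
/-- The Poisson pmf: `P(Z = k)` for `Z ~ Po(λ)`. -/
noncomputable def poissonPmf (lam : ℝ) (k : ℕ) : ℝ :=
  Real.exp (-lam) * lam ^ k / k.factorial

/-- The truncated Poisson pmf on `{0,...,n}`:
`π_i = P(Z = i) / P(Z ≤ n)` for `Z ~ Po(λ)`. -/
noncomputable def truncPoissonPmf (lam : ℝ) (n i : ℕ) : ℝ :=
  poissonPmf lam i / ∑ j ∈ Finset.range (n + 1), poissonPmf lam j

/-- The key inequality in the proof of the truncated Poisson Stein factor bound:
for `1 ≤ i ≤ n`, `(π_{i+1} + ⋯ + π_n)/λ + (π_0 + ⋯ + π_{i-1})/i ≤ (1 - π₀)/λ`. -/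
theorem truncPoisson_stein_factor_inequality (lam : ℝ) (hlam : 0 < lam)
    (n : ℕ) (i : ℕ) (hi1 : 1 ≤ i) (hin : i ≤ n) :
    (∑ j ∈ Finset.Icc (i + 1) n, truncPoissonPmf lam n j) / lam
        + (∑ j ∈ Finset.range i, truncPoissonPmf lam n j) / i
      ≤ (1 - truncPoissonPmf lam n 0) / lam := by
  set p := poissonPmf lam with hp
  have hppos : ∀ j : ℕ, 0 < p j := by
    intro j
    have : (0:ℝ) < j.factorial := by positivity
    unfold p
    unfold poissonPmf
    positivity
  set S := ∑ j ∈ Finset.range (n + 1), p j with hSdef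
  have hS : 0 < S := Finset.sum_pos (fun j _ => hppos j) ⟨0, by simp⟩
  have hi0 : (0:ℝ) < (i:ℝ) := by exact_mod_cast hi1
  -- step relation
  have hstep : ∀ j : ℕ, lam * p j = (j + 1) * p (j + 1) := by
    intro j
    unfold p
    unfold poissonPmf
    have h1 : ((j:ℝ) + 1) ≠ 0 := by positivity
    have h2 : (j.factorial : ℝ) ≠ 0 := by positivity
    rw [Nat.factorial_succ]
    push_cast
    field_simp
    ring
  set A := ∑ j ∈ Finset.Icc (i + 1) n, p j with hA
  set B := ∑ j ∈ Finset.range i, p j with hB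
  set C := ∑ j ∈ Finset.Icc 1 i, p j with hC
  -- S = p 0 + ∑ Ioc 0 n
  have e1 : Finset.Icc 1 i = Finset.Ioc 0 i := by ext x; simp; omega
  have e2 : Finset.Icc (i + 1) n = Finset.Ioc i n := by ext x; simp
  have hsplit : S = p 0 + (C + A) := by
    have h1 : C + A = ∑ j ∈ Finset.Ioc 0 n, p j := by
      rw [hC, hA, e1, e2]
      exact Finset.sum_Ioc_consecutive p (Nat.zero_le i) hin
    have hins : Finset.range (n + 1) = insert 0 (Finset.Ioc 0 n) := by
      ext x; simp
    rw [h1, hSdef, hins, Finset.sum_insert (by simp)]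
  -- key: lam * B ≤ i * C
  have hkey : lam * B ≤ (i:ℝ) * C := by
    have hCr : C = ∑ j ∈ Finset.range i, p (1 + j) := by
      have e3 : Finset.Icc 1 i = Finset.Ico 1 (i + 1) := by ext x; simp
      rw [hC, e3, Finset.sum_Ico_eq_sum_range]
      simp
    rw [hB, Finset.mul_sum, hCr, Finset.mul_sum]
    apply Finset.sum_le_sum
    intro j hj
    rw [hstep j]
    have hji : (j:ℝ) + 1 ≤ i := by
      have := Finset.mem_range.mp hj
      exact_mod_cast Nat.succ_le_of_lt this
    have : p (j + 1) = p (1 + j) := by rw [Nat.add_comm]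
    rw [this]
    exact mul_le_mul_of_nonneg_right hji (le_of_lt (hppos _))
  -- rewrite goal
  have hsum_div : ∀ (s : Finset ℕ), ∑ j ∈ s, truncPoissonPmf lam n j = (∑ j ∈ s, p j) / S := by
    intro s
    rw [Finset.sum_div]
    rfl
  rw [hsum_div, hsum_div]
  have h0 : truncPoissonPmf lam n 0 = p 0 / S := rfl
  rw [h0]
  have hR : 1 - p 0 / S = (C + A) / S := by
    field_simp
    linarith [hsplit]
  rw [hR]
  have h1 : (B / S) / i ≤ (C / S) / lam := by
    rw [div_le_div_iff₀ hi0 hlam]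
    rw [div_mul_eq_mul_div, div_mul_eq_mul_div, div_le_div_iff₀ hS hS]
    nlinarith [hkey, hS]
  have h2 : (A / S) / lam + (C / S) / lam = ((C + A) / S) / lam := by
    field_simp
    ring
  linarith [h1, h2]
end

section
/- Let λ > 0 and n be a non-negative integer. Let W be a random variable taking values in {0,1,...,n}, and suppose there is a constant C ≥ 0 such that for every bounded function g : ℕ → ℝ, | E[ λ·g(W+1) − W·g(W) ] | ≤ C · sup_{i ∈ ℕ} | g(i+1) − g(i) |. Then d_TV( L(W), Po^{[0,n]}(λ) ) ≤ C·(1 − π_0)/λ ≤ C·(1 − e^{−λ})/λ, where π_0 = P(Z = 0)/P(Z ≤ n) for Z ~ Po(λ). -/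
open Finset

noncomputable def pq (lam : ℝ) (k : ℕ) : ℝ := lam ^ k / k.factorial
noncomputable def pQ (lam : ℝ) (j : ℕ) : ℝ := ∑ k ∈ Finset.range (j+1), pq lam k

variable {lam : ℝ}

lemma pq_pos (hlam : 0 < lam) (k : ℕ) : 0 < pq lam k := by
  unfold pq; positivity

lemma pq_zero : pq lam 0 = 1 := by simp [pq]

lemma pq_succ (k : ℕ) : ((k : ℝ) + 1) * pq lam (k+1) = lam * pq lam k := by
  unfold pq
  rw [Nat.factorial_succ]
  push_cast
  have h1 : (k.factorial : ℝ) ≠ 0 := by positivity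
  field_simp
  ring

lemma pQ_pos (hlam : 0 < lam) (j : ℕ) : 0 < pQ lam j := by
  unfold pQ
  exact Finset.sum_pos (fun k _ => pq_pos hlam k) (by simp)

lemma pQ_succ (j : ℕ) : pQ lam (j+1) = pQ lam j + pq lam (j+1) := by
  unfold pQ; rw [Finset.sum_range_succ]

lemma pQ_one_le (hlam : 0 < lam) (j : ℕ) : 1 ≤ pQ lam j := by
  have h0 : pq lam 0 = 1 := pq_zero
  calc (1:ℝ) = pq lam 0 := h0.symm
    _ ≤ pQ lam j := Finset.single_le_sum (fun k _ => (pq_pos hlam k).le) (by simp)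

lemma pQ_mono (hlam : 0 < lam) {j n : ℕ} (h : j ≤ n) : pQ lam j ≤ pQ lam n := by
  unfold pQ
  exact Finset.sum_le_sum_of_subset_of_nonneg
    (Finset.range_subset_range.2 (by omega)) (fun k _ _ => (pq_pos hlam k).le)

-- termwise ratio lemma
lemma pqT (hlam : 0 < lam) {j k : ℕ} (h : j ≤ k) :
    pq lam (k+1) * pq lam j ≤ pq lam k * pq lam (j+1) := by
  have h1 := pq_succ (lam := lam) k
  have h2 := pq_succ (lam := lam) j
  have hk : (0:ℝ) < (k:ℝ) + 1 := by positivity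
  have hj : (0:ℝ) < (j:ℝ) + 1 := by positivity
  have hjk : ((j:ℝ)+1) ≤ (k:ℝ)+1 := by exact_mod_cast by omega
  have p1 := pq_pos hlam j
  have p2 := pq_pos hlam k
  have key : pq lam (k+1) * pq lam j * (((k:ℝ)+1) * ((j:ℝ)+1))
      ≤ pq lam k * pq lam (j+1) * (((k:ℝ)+1) * ((j:ℝ)+1)) := by
    have e1 : pq lam (k+1) * pq lam j * (((k:ℝ)+1) * ((j:ℝ)+1))
        = (lam * pq lam k) * pq lam j * ((j:ℝ)+1) := by rw [← h1]; ring
    have e2 : pq lam k * pq lam (j+1) * (((k:ℝ)+1) * ((j:ℝ)+1))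
        = (lam * pq lam j) * pq lam k * ((k:ℝ)+1) := by rw [← h2]; ring
    rw [e1, e2]
    nlinarith [mul_le_mul_of_nonneg_left hjk (show (0:ℝ) ≤ lam * pq lam k * pq lam j by positivity)]
  exact le_of_mul_le_mul_right key (by positivity)

lemma tail_eq (d j : ℕ) : pQ lam (j + d) - pQ lam j = ∑ k ∈ range d, pq lam (j+1+k) := by
  induction d with
  | zero => simp
  | succ d ih =>
      have h1 : j + (d+1) = (j+d) + 1 := by omega
      have h2 : j + 1 + d = j + d + 1 := by omega
      rw [h1, pQ_succ, Finset.sum_range_succ, ← ih, h2]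
      try ring

lemma M1 (hlam : 0 < lam) (j : ℕ) : pQ lam j * pq lam (j+1) ≤ pQ lam (j+1) * pq lam j := by
  have e : pQ lam (j+1) = ∑ k ∈ range (j+1), pq lam (k+1) + pq lam 0 := by
    unfold pQ; rw [Finset.sum_range_succ' (fun k => pq lam k) (j+1)]
  have h2 : 0 ≤ pq lam 0 * pq lam j := mul_nonneg (pq_pos hlam 0).le (pq_pos hlam j).le
  calc pQ lam j * pq lam (j+1)
      = ∑ k ∈ range (j+1), pq lam k * pq lam (j+1) := by unfold pQ; rw [Finset.sum_mul]
    _ ≤ ∑ k ∈ range (j+1), pq lam (k+1) * pq lam j := by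
        apply Finset.sum_le_sum
        intro k hk
        have hkj : k ≤ j := by simpa [Nat.lt_succ_iff] using hk
        have := pqT hlam hkj
        nlinarith [this]
    _ ≤ (∑ k ∈ range (j+1), pq lam (k+1) + pq lam 0) * pq lam j := by
        rw [add_mul, Finset.sum_mul]; linarith
    _ = pQ lam (j+1) * pq lam j := by rw [← e]

lemma M2 (hlam : 0 < lam) {j n : ℕ} (h : j + 1 ≤ n) :
    (pQ lam n - pQ lam (j+1)) * pq lam j ≤ (pQ lam n - pQ lam j) * pq lam (j+1) := by
  obtain ⟨e, he⟩ : ∃ e, n = (j+1) + e := ⟨n - (j+1), by omega⟩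
  subst he
  have t1 : pQ lam (j+1+e) - pQ lam (j+1) = ∑ k ∈ range e, pq lam (j+2+k) := by
    rw [tail_eq]
  have t2 : pQ lam (j+1+e) - pQ lam j = ∑ k ∈ range (e+1), pq lam (j+1+k) := by
    have h : j+1+e = j + (e+1) := by omega
    rw [h, tail_eq]
  rw [t1, t2, Finset.sum_mul, Finset.sum_mul]
  calc ∑ k ∈ range e, pq lam (j+2+k) * pq lam j
      ≤ ∑ k ∈ range e, pq lam (j+1+k) * pq lam (j+1) := by
        apply Finset.sum_le_sum
        intro k _
        have : j + 2 + k = (j+1+k) + 1 := by omega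
        rw [this]
        exact pqT hlam (by omega)
    _ ≤ ∑ k ∈ range (e+1), pq lam (j+1+k) * pq lam (j+1) := by
        apply Finset.sum_le_sum_of_subset_of_nonneg (range_subset_range.2 (by omega))
        intro k _ _
        have := pq_pos hlam (j+1+k); have := pq_pos hlam (j+1); positivity

lemma M3 (hlam : 0 < lam) (j : ℕ) :
    lam * pQ lam j ≤ ((j:ℝ)+1) * (pQ lam (j+1) - 1) := by
  have e : pQ lam (j+1) - 1 = ∑ k ∈ range (j+1), pq lam (k+1) := by
    have : pQ lam (j+1) = ∑ k ∈ range (j+1), pq lam (k+1) + pq lam 0 := by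
      unfold pQ; rw [Finset.sum_range_succ' (fun k => pq lam k) (j+1)]
    rw [this, pq_zero]; ring
  rw [e, Finset.mul_sum]
  unfold pQ
  rw [Finset.mul_sum]
  apply Finset.sum_le_sum
  intro k hk
  have hkj : k ≤ j := by simpa [Nat.lt_succ_iff] using hk
  have h1 := pq_succ (lam := lam) k
  have hp := pq_pos hlam (k+1)
  have : ((k:ℝ)+1) ≤ (j:ℝ)+1 := by exact_mod_cast by omega
  nlinarith

noncomputable def gv (lam : ℝ) (n a j : ℕ) : ℝ :=
  pq lam a * ((if a ≤ j then pQ lam n else 0) - pQ lam j) / (lam * pq lam j * pQ lam n)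

noncomputable def sg (lam : ℝ) (n a : ℕ) : ℕ → ℝ := fun m => gv lam n a (min (m-1) n)

private lemma alg1 (l qa qj1 Q Pj x1 x0 jr : ℝ) (hl : l ≠ 0) (hq : qj1 ≠ 0) (hQ : Q ≠ 0)
    (hjr : jr ≠ 0) :
    l * (qa * (x1 - (Pj + qj1)) / (l * qj1 * Q)) - jr * (qa * (x0 - Pj) / (l * (jr * qj1 / l) * Q))
      = qa * ((x1 - x0) - qj1) / (qj1 * Q) := by
  field_simp
  ring

lemma pq_eq (hlam : 0 < lam) (j : ℕ) :
    pq lam j = ((j:ℝ)+1) * pq lam (j+1) / lam := by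
  have := pq_succ (lam := lam) j
  field_simp [hlam.ne']
  linarith

lemma stein_succ (hlam : 0 < lam) (n a j : ℕ) :
    lam * gv lam n a (j+1) - ((j:ℝ)+1) * gv lam n a j
      = (if a = j+1 then 1 else 0) - pq lam a / pQ lam n := by
  have hq1 := pq_pos hlam (j+1)
  have hQ := pQ_pos hlam n
  have key : lam * gv lam n a (j+1) - ((j:ℝ)+1) * gv lam n a j
      = pq lam a * (((if a ≤ j+1 then pQ lam n else 0) - (if a ≤ j then pQ lam n else 0))
          - pq lam (j+1)) / (pq lam (j+1) * pQ lam n) := by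
    unfold gv
    rw [pQ_succ, pq_eq hlam j]
    exact alg1 lam (pq lam a) (pq lam (j+1)) (pQ lam n) (pQ lam j) _ _ ((j:ℝ)+1)
      hlam.ne' hq1.ne' hQ.ne' (by positivity)
  rw [key]
  rcases eq_or_ne a (j+1) with rfl | hne
  · rw [if_pos (le_refl _), if_neg (by omega : ¬ (j+1 ≤ j)), if_pos rfl]
    field_simp
    ring
  · have : (if a ≤ j+1 then pQ lam n else 0) = (if a ≤ j then pQ lam n else 0) := by
      by_cases h : a ≤ j
      · rw [if_pos h, if_pos (by omega)]
      · rw [if_neg h, if_neg (by omega)]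
    rw [this, if_neg hne]
    field_simp
    ring

lemma stein_zero (hlam : 0 < lam) (n a : ℕ) :
    lam * gv lam n a 0 = (if a = 0 then 1 else 0) - pq lam a / pQ lam n := by
  have hQ := pQ_pos hlam n
  unfold gv
  have h0 : pQ lam 0 = 1 := by unfold pQ; simp [pq_zero]
  rw [h0, pq_zero]
  rcases Nat.eq_zero_or_pos a with rfl | hapos
  · rw [if_pos (le_refl 0), if_pos rfl, pq_zero]
    field_simp
  · rw [if_neg (by omega), if_neg (by omega)]
    field_simp
    ring

/-- Stein identity for the singleton solution `sg`. -/
lemma stein_id (hlam : 0 < lam) {n j : ℕ} (a : ℕ) (hj : j ≤ n) :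
    lam * sg lam n a (j+1) - (j:ℝ) * sg lam n a j
      = (if a = j then 1 else 0) - pq lam a / pQ lam n := by
  rcases Nat.eq_zero_or_pos j with rfl | hjpos
  · have e1 : sg lam n a 1 = gv lam n a 0 := by simp [sg]
    rw [e1]
    push_cast
    rw [zero_mul, sub_zero]
    exact stein_zero hlam n a
  · obtain ⟨i, rfl⟩ : ∃ i, j = i + 1 := ⟨j - 1, by omega⟩
    have e1 : sg lam n a (i+1+1) = gv lam n a (i+1) := by
      simp only [sg]; congr 1; omega
    have e2 : sg lam n a (i+1) = gv lam n a i := by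
      simp only [sg]; congr 1; omega
    rw [e1, e2]
    push_cast
    exact stein_succ hlam n a i

/-- Difference bound for the singleton solution. -/
lemma dle (hlam : 0 < lam) {n a : ℕ} (ha : a ≤ n) (m : ℕ) :
    sg lam n a (m+1) - sg lam n a m
      ≤ if a = m then (pQ lam n - 1) / (lam * pQ lam n) else 0 := by
  have hQ := pQ_pos hlam n
  have hQ1 := pQ_one_le hlam n
  have hB : 0 ≤ (pQ lam n - 1) / (lam * pQ lam n) := by
    apply div_nonneg (by linarith) (by positivity)
  rcases Nat.eq_zero_or_pos m with rfl | hmpos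
  · have : sg lam n a 1 - sg lam n a 0 = 0 := by simp [sg]
    rw [this]
    split
    · exact hB
    · exact le_rfl
  obtain ⟨j, rfl⟩ : ∃ j, m = j + 1 := ⟨m - 1, by omega⟩
  by_cases hjn : j + 1 ≤ n
  · have e1 : sg lam n a (j+1+1) = gv lam n a (j+1) := by
      simp only [sg]; congr 1; omega
    have e2 : sg lam n a (j+1) = gv lam n a j := by
      simp only [sg]; congr 1; omega
    rw [e1, e2]
    have hqj := pq_pos hlam j
    have hqj1 := pq_pos hlam (j+1)
    have hqa := pq_pos hlam a
    rcases lt_trichotomy a (j+1) with hlt | rfl | hgt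
    · -- a ≤ j : decreasing, bound 0
      rw [if_neg (by omega)]
      have h1 : gv lam n a (j+1) ≤ gv lam n a j := by
        unfold gv
        rw [if_pos (by omega : a ≤ j + 1), if_pos (by omega : a ≤ j)]
        rw [div_le_div_iff₀ (by positivity) (by positivity)]
        have hM := M2 hlam hjn
        nlinarith [mul_le_mul_of_nonneg_left hM (show (0:ℝ) ≤ pq lam a * (lam * pQ lam n) by positivity)]
      linarith
    · -- a = j+1 : main bound
      rw [if_pos rfl]
      have A1 : gv lam n (j+1) (j+1) = (pQ lam n - pQ lam (j+1)) / (lam * pQ lam n) := by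
        unfold gv
        rw [if_pos (le_refl _)]
        field_simp
      have A2 : -((pQ lam (j+1) - 1) / (lam * pQ lam n)) ≤ gv lam n (j+1) j := by
        unfold gv
        rw [if_neg (by omega : ¬ (j+1 ≤ j)), ← neg_div]
        rw [div_le_div_iff₀ (by positivity) (by positivity)]
        have h1 : lam * pQ lam j * (pq lam (j+1) * pQ lam n)
            ≤ ((j:ℝ)+1) * (pQ lam (j+1) - 1) * (pq lam (j+1) * pQ lam n) :=
          mul_le_mul_of_nonneg_right (M3 hlam j) (by positivity)
        have h2 : ((j:ℝ)+1) * (pQ lam (j+1) - 1) * (pq lam (j+1) * pQ lam n)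
            = lam * pq lam j * ((pQ lam (j+1) - 1) * pQ lam n) := by
          linear_combination ((pQ lam (j+1) - 1) * pQ lam n) * pq_succ (lam := lam) j
        nlinarith [h1, h2]
      have hsum : (pQ lam n - pQ lam (j+1)) / (lam * pQ lam n)
            + (pQ lam (j+1) - 1) / (lam * pQ lam n)
          = (pQ lam n - 1) / (lam * pQ lam n) := by
        rw [← add_div]
        ring_nf
      rw [A1]
      linarith
    · -- a > j+1 : decreasing, bound 0
      rw [if_neg (by omega)]
      have h1 : gv lam n a (j+1) ≤ gv lam n a j := by
        unfold gv
        rw [if_neg (by omega : ¬ (a ≤ j + 1)), if_neg (by omega : ¬ (a ≤ j))]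
        rw [div_le_div_iff₀ (by positivity) (by positivity)]
        have hM := M1 hlam j
        nlinarith [mul_le_mul_of_nonneg_left hM (show (0:ℝ) ≤ pq lam a * (lam * pQ lam n) by positivity)]
      linarith
  · -- m = j+1 > n : both equal gv a n, and a = j+1 impossible
    have e1 : sg lam n a (j+1+1) = gv lam n a n := by
      simp only [sg]
      congr 1
      omega
    have e2 : sg lam n a (j+1) = gv lam n a n := by
      simp only [sg]
      congr 1
      omega
    rw [e1, e2, if_neg (by omega)]
    simp

lemma sum_gv_zero (hlam : 0 < lam) {n j : ℕ} (hj : j ≤ n) :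
    ∑ a ∈ range (n+1), gv lam n a j = 0 := by
  unfold gv
  rw [← Finset.sum_div]
  have : ∑ a ∈ range (n+1), pq lam a * ((if a ≤ j then pQ lam n else 0) - pQ lam j)
      = (∑ a ∈ range (n+1), if a ≤ j then pq lam a * pQ lam n else 0)
        - ∑ a ∈ range (n+1), pq lam a * pQ lam j := by
    rw [← Finset.sum_sub_distrib]
    apply Finset.sum_congr rfl
    intro a _
    rw [mul_sub, mul_ite, mul_zero]
  rw [this]
  have h1 : (∑ a ∈ range (n+1), if a ≤ j then pq lam a * pQ lam n else 0)
      = pQ lam j * pQ lam n := by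
    rw [Finset.sum_ite, Finset.sum_const_zero, add_zero]
    have hf : (range (n+1)).filter (fun a => a ≤ j) = range (j+1) := by
      ext a
      simp only [Finset.mem_filter, Finset.mem_range]
      omega
    rw [hf, ← Finset.sum_mul]
    rfl
  have h2 : ∑ a ∈ range (n+1), pq lam a * pQ lam j = pQ lam n * pQ lam j := by
    rw [← Finset.sum_mul]
    rfl
  rw [h1, h2]
  rw [show pQ lam j * pQ lam n - pQ lam n * pQ lam j = 0 by ring, zero_div]

lemma sum_sg_zero (hlam : 0 < lam) (n m : ℕ) :
    ∑ a ∈ range (n+1), sg lam n a m = 0 := by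
  simp only [sg]
  exact sum_gv_zero hlam (by omega)

/-- Two-sided difference bound for the solution attached to a set `A`. -/
lemma dabs (hlam : 0 < lam) {n : ℕ} {A : Finset ℕ} (hA : A ⊆ range (n+1)) (m : ℕ) :
    |∑ a ∈ A, (sg lam n a (m+1) - sg lam n a m)|
      ≤ (pQ lam n - 1) / (lam * pQ lam n) := by
  have hQ := pQ_pos hlam n
  have hQ1 := pQ_one_le hlam n
  have hB : 0 ≤ (pQ lam n - 1) / (lam * pQ lam n) :=
    div_nonneg (by linarith) (by positivity)
  have upper : ∀ B : Finset ℕ, B ⊆ range (n+1) →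
      ∑ a ∈ B, (sg lam n a (m+1) - sg lam n a m) ≤ (pQ lam n - 1) / (lam * pQ lam n) := by
    intro B hB'
    calc ∑ a ∈ B, (sg lam n a (m+1) - sg lam n a m)
        ≤ ∑ a ∈ B, (if a = m then (pQ lam n - 1) / (lam * pQ lam n) else 0) := by
          apply Finset.sum_le_sum
          intro a haB
          exact dle hlam (by have := hB' haB; simp at this; omega) m
      _ = if m ∈ B then (pQ lam n - 1) / (lam * pQ lam n) else 0 :=
          Finset.sum_ite_eq' B m _
      _ ≤ (pQ lam n - 1) / (lam * pQ lam n) := by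
          split
          · exact le_rfl
          · exact hB
  have htot : ∑ a ∈ range (n+1), (sg lam n a (m+1) - sg lam n a m) = 0 := by
    rw [Finset.sum_sub_distrib, sum_sg_zero hlam, sum_sg_zero hlam, sub_zero]
  have hsplit : ∑ a ∈ range (n+1) \ A, (sg lam n a (m+1) - sg lam n a m)
      + ∑ a ∈ A, (sg lam n a (m+1) - sg lam n a m) = 0 := by
    rw [Finset.sum_sdiff hA]
    exact htot
  rw [abs_le]
  constructor
  · have := upper (range (n+1) \ A) (Finset.sdiff_subset)
    linarith
  · exact upper A hA

open MeasureTheory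

lemma int_comp {Ω : Type*} [MeasurableSpace Ω] (μ : Measure Ω) [IsProbabilityMeasure μ]
    {n : ℕ} (W : Ω → ℕ) (hW : Measurable W) (hWn : ∀ ω, W ω ≤ n) (H : ℕ → ℝ) :
    ∫ ω, H (W ω) ∂μ = ∑ j ∈ range (n+1), (μ {ω | W ω = j}).toReal * H j := by
  have hmeas : ∀ j : ℕ, MeasurableSet {ω | W ω = j} :=
    fun j => hW (measurableSet_singleton j)
  have hrep : ∀ ω, H (W ω)
      = ∑ j ∈ range (n+1), Set.indicator {ω' | W ω' = j} (fun _ => H j) ω := by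
    intro ω
    have h0 : ∀ j ∈ range (n+1), j ≠ W ω →
        Set.indicator {ω' | W ω' = j} (fun _ => H j) ω = 0 := by
      intro j _ hj
      exact Set.indicator_of_notMem (fun h => hj (by exact h.symm)) _
    have hs := Finset.sum_eq_single_of_mem
      (f := fun j => Set.indicator {ω' | W ω' = j} (fun _ => H j) ω)
      (W ω) (Finset.mem_range.2 (by have := hWn ω; omega)) h0
    rw [hs]
    exact (Set.indicator_of_mem (show ω ∈ {ω' | W ω' = W ω} from rfl) (fun _ => H (W ω))).symm
  calc ∫ ω, H (W ω) ∂μ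
      = ∫ ω, ∑ j ∈ range (n+1), Set.indicator {ω' | W ω' = j} (fun _ => H j) ω ∂μ := by
        congr 1; funext ω; exact hrep ω
    _ = ∑ j ∈ range (n+1), ∫ ω, Set.indicator {ω' | W ω' = j} (fun _ => H j) ω ∂μ :=
        integral_finset_sum _ (fun j _ => (integrable_const (H j)).indicator (hmeas j))
    _ = ∑ j ∈ range (n+1), (μ {ω | W ω = j}).toReal * H j := by
        apply Finset.sum_congr rfl
        intro j _
        rw [integral_indicator_const _ (hmeas j), smul_eq_mul]
        rfl

lemma psum_one {Ω : Type*} [MeasurableSpace Ω] (μ : Measure Ω) [IsProbabilityMeasure μ]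
    {n : ℕ} (W : Ω → ℕ) (hW : Measurable W) (hWn : ∀ ω, W ω ≤ n) :
    ∑ j ∈ range (n+1), (μ {ω | W ω = j}).toReal = 1 := by
  have h := int_comp μ W hW hWn (fun _ => (1:ℝ))
  simp only [mul_one] at h
  rw [← h]
  simp

lemma half_sum (s : Finset ℕ) (x : ℕ → ℝ) (h : ∑ i ∈ s, x i = 0) :
    (1/2) * ∑ i ∈ s, |x i| = ∑ i ∈ s.filter (fun i => 0 ≤ x i), x i := by
  have hsplit := Finset.sum_filter_add_sum_filter_not s (fun i => 0 ≤ x i) x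
  have habs : ∑ i ∈ s, |x i|
      = ∑ i ∈ s.filter (fun i => 0 ≤ x i), x i
        - ∑ i ∈ s.filter (fun i => ¬ 0 ≤ x i), x i := by
    rw [← Finset.sum_filter_add_sum_filter_not s (fun i => 0 ≤ x i) (fun i => |x i|)]
    have h1 : ∑ i ∈ s.filter (fun i => 0 ≤ x i), |x i|
        = ∑ i ∈ s.filter (fun i => 0 ≤ x i), x i := by
      apply Finset.sum_congr rfl
      intro i hi
      exact abs_of_nonneg (Finset.mem_filter.1 hi).2
    have h2 : ∑ i ∈ s.filter (fun i => ¬ 0 ≤ x i), |x i|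
        = - ∑ i ∈ s.filter (fun i => ¬ 0 ≤ x i), x i := by
      have hc : ∀ i ∈ s.filter (fun i => ¬ 0 ≤ x i), |x i| = - x i := by
        intro i hi
        exact abs_of_neg (lt_of_not_ge (Finset.mem_filter.1 hi).2)
      rw [Finset.sum_congr rfl hc, Finset.sum_neg_distrib]
    rw [h1, h2]
    ring
  linarith

lemma trunc_eq (hlam : 0 < lam) (n i : ℕ) :
    truncPoissonPmf lam n i = pq lam i / pQ lam n := by
  unfold truncPoissonPmf poissonPmf
  have he : (0:ℝ) < Real.exp (-lam) := Real.exp_pos _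
  have h1 : ∀ k : ℕ, Real.exp (-lam) * lam ^ k / (k.factorial : ℝ)
      = Real.exp (-lam) * pq lam k := by
    intro k; unfold pq; ring
  simp only [h1]
  rw [← Finset.mul_sum]
  exact mul_div_mul_left _ _ he.ne'

lemma pQ_le_exp (hlam : 0 < lam) (n : ℕ) : pQ lam n ≤ Real.exp lam := by
  unfold pQ pq
  exact Real.sum_le_exp_of_nonneg hlam.le (n+1)


open MeasureTheory

/-- Main theorem (Poisson case): if a Stein's-method bound
`|E[λ g(W+1) - W g(W)]| ≤ C · sup_i |g(i+1) - g(i)|` holds for all bounded `g : ℕ → ℝ`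
for a random variable `W` with values in `{0,...,n}`, then
`d_TV(L(W), Po^{[0,n]}(λ)) ≤ C (1 - π₀)/λ ≤ C (1 - e^{-λ})/λ`. -/
theorem truncPoisson_approximation {Ω : Type*} [MeasurableSpace Ω]
    (μ : Measure Ω) [IsProbabilityMeasure μ]
    (lam : ℝ) (hlam : 0 < lam)
    (n : ℕ) (W : Ω → ℕ) (hW : Measurable W) (hWn : ∀ ω, W ω ≤ n)
    (C : ℝ) (hC : 0 ≤ C)
    (hstein : ∀ g : ℕ → ℝ, (∃ M : ℝ, ∀ k : ℕ, |g k| ≤ M) →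
      |∫ ω, (lam * g (W ω + 1) - (W ω : ℝ) * g (W ω)) ∂μ|
        ≤ C * ⨆ i : ℕ, |g (i + 1) - g i|) :
    (1 / 2) * ∑ i ∈ Finset.range (n + 1),
        |(μ {ω | W ω = i}).toReal - truncPoissonPmf lam n i|
      ≤ C * ((1 - truncPoissonPmf lam n 0) / lam) ∧
    C * ((1 - truncPoissonPmf lam n 0) / lam)
      ≤ C * ((1 - Real.exp (-lam)) / lam) := by
  have hQ := pQ_pos hlam n
  have hQ1 := pQ_one_le hlam n
  have hπ : ∀ i, truncPoissonPmf lam n i = pq lam i / pQ lam n := trunc_eq hlam n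
  set p : ℕ → ℝ := fun i => (μ {ω | W ω = i}).toReal with hp
  set π : ℕ → ℝ := fun i => pq lam i / pQ lam n with hπdef
  have hpsum : ∑ i ∈ range (n+1), p i = 1 := psum_one μ W hW hWn
  have hπsum : ∑ i ∈ range (n+1), π i = 1 := by
    simp only [hπdef]
    rw [← Finset.sum_div]
    exact div_self hQ.ne'
  set A : Finset ℕ := (range (n+1)).filter (fun i => 0 ≤ p i - π i) with hA
  have hAsub : A ⊆ range (n+1) := Finset.filter_subset _ _
  have hhalf : (1/2) * ∑ i ∈ range (n+1), |p i - π i| = ∑ i ∈ A, (p i - π i) :=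
    half_sum _ _ (by rw [Finset.sum_sub_distrib, hpsum, hπsum]; ring)
  set g : ℕ → ℝ := fun m => ∑ a ∈ A, sg lam n a m with hg
  have hbdd : ∃ M : ℝ, ∀ k : ℕ, |g k| ≤ M := by
    refine ⟨∑ j ∈ range (n+1), |∑ a ∈ A, gv lam n a j|, fun k => ?_⟩
    have hgk : g k = ∑ a ∈ A, gv lam n a (min (k-1) n) := rfl
    rw [hgk]
    have hmem : min (k-1) n ∈ range (n+1) := Finset.mem_range.2 (by omega)
    exact Finset.single_le_sum (f := fun j => |∑ a ∈ A, gv lam n a j|)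
      (fun j _ => abs_nonneg _) hmem
  have hstein' := hstein g hbdd
  have hint : ∫ ω, (lam * g (W ω + 1) - (W ω : ℝ) * g (W ω)) ∂μ
      = ∑ j ∈ range (n+1), p j * (lam * g (j+1) - (j:ℝ) * g j) :=
    int_comp μ W hW hWn (fun j => lam * g (j+1) - (j:ℝ) * g j)
  have hval : ∀ j ∈ range (n+1),
      lam * g (j+1) - (j:ℝ) * g j = (if j ∈ A then 1 else 0) - ∑ a ∈ A, π a := by
    intro j hj
    have hjn : j ≤ n := by have := Finset.mem_range.1 hj; omega
    simp only [hg]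
    rw [Finset.mul_sum, Finset.mul_sum, ← Finset.sum_sub_distrib]
    have hterm : ∀ a ∈ A, lam * sg lam n a (j+1) - (j:ℝ) * sg lam n a j
        = (if a = j then 1 else 0) - π a := by
      intro a _
      rw [stein_id hlam a hjn]
    rw [Finset.sum_congr rfl hterm, Finset.sum_sub_distrib,
      Finset.sum_ite_eq' A j (fun _ => (1:ℝ))]
  have hintval : ∫ ω, (lam * g (W ω + 1) - (W ω : ℝ) * g (W ω)) ∂μ
      = ∑ i ∈ A, (p i - π i) := by
    rw [hint, Finset.sum_congr rfl (fun j hj => by rw [hval j hj])]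
    have e1 : ∀ j ∈ range (n+1),
        p j * ((if j ∈ A then 1 else 0) - ∑ a ∈ A, π a)
          = (if j ∈ A then p j else 0) - p j * ∑ a ∈ A, π a := by
      intro j _
      rw [mul_sub, mul_ite, mul_one, mul_zero]
    rw [Finset.sum_congr rfl e1, Finset.sum_sub_distrib]
    rw [Finset.sum_ite_mem, Finset.inter_eq_right.mpr hAsub]
    rw [← Finset.sum_mul, hpsum, one_mul, Finset.sum_sub_distrib]
  have hnonneg : 0 ≤ ∑ i ∈ A, (p i - π i) :=
    Finset.sum_nonneg (fun i hi => (Finset.mem_filter.1 hi).2)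
  have hsup : (⨆ i : ℕ, |g (i + 1) - g i|) ≤ (pQ lam n - 1) / (lam * pQ lam n) := by
    apply ciSup_le
    intro m
    have : g (m+1) - g m = ∑ a ∈ A, (sg lam n a (m+1) - sg lam n a m) := by
      rw [hg, Finset.sum_sub_distrib]
    rw [this]
    exact dabs hlam hAsub m
  have hB : (pQ lam n - 1) / (lam * pQ lam n) = (1 - truncPoissonPmf lam n 0) / lam := by
    rw [hπ 0, pq_zero]
    field_simp
  constructor
  · calc (1/2) * ∑ i ∈ range (n+1), |p i - truncPoissonPmf lam n i|
        = (1/2) * ∑ i ∈ range (n+1), |p i - π i| := by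
          simp only [hπ, hπdef]
      _ = ∑ i ∈ A, (p i - π i) := hhalf
      _ ≤ |∫ ω, (lam * g (W ω + 1) - (W ω : ℝ) * g (W ω)) ∂μ| := by
          rw [hintval]; exact le_abs_self _
      _ ≤ C * ⨆ i : ℕ, |g (i + 1) - g i| := hstein'
      _ ≤ C * ((pQ lam n - 1) / (lam * pQ lam n)) := mul_le_mul_of_nonneg_left hsup hC
      _ = C * ((1 - truncPoissonPmf lam n 0) / lam) := by rw [hB]
  · have hQle : pQ lam n ≤ Real.exp lam := pQ_le_exp hlam n
    have hpi0 : Real.exp (-lam) ≤ truncPoissonPmf lam n 0 := by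
      rw [hπ 0, pq_zero, le_div_iff₀ hQ]
      calc Real.exp (-lam) * pQ lam n ≤ Real.exp (-lam) * Real.exp lam :=
            mul_le_mul_of_nonneg_left hQle (Real.exp_pos _).le
        _ = 1 := by rw [← Real.exp_add]; simp
    apply mul_le_mul_of_nonneg_left _ hC
    exact (div_le_div_iff_of_pos_right hlam).mpr (by linarith)
end

section
/- In the machine-fault model with fixed parameters N ≥ 1 and R ≥ 1, let W = W(p) be the fault count, λ = λ(p) = E[W]. Then Var(W)/λ = 1 + O(p) as p → 0; that is, there exist constants K > 0 and p_0 > 0 such that for all 0 < p < p_0, | 1 − Var(W)/λ | ≤ K·p. Consequently the truncated Poisson approximation error bound (1 − π_0)·(1 − Var(W)/λ) is of order p as p → 0. -/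
/-- The fault indicators of the machine-fault model: given i.i.d. Bernoulli(p)
"potential fault" variables `U i` (for days `i = 1, 2, ...`) and a repair time `R`,
a fault occurs on day `i` iff `U i = 1` and no fault occurred in the previous `R - 1`
days: `I_i = U_i · ∏_{j = max(1, i+1-R)}^{i-1} (1 - I_j)`. -/
noncomputable def faultInd {Ω : Type*} (U : ℕ → Ω → ℝ) (R : ℕ) : ℕ → Ω → ℝ
  | i => fun ω => U i ω *
      ∏ j ∈ (Finset.Ico (max 1 (i + 1 - R)) i).attach,
        (1 - faultInd U R j.1 ω)
  termination_by i => i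
  decreasing_by exact (Finset.mem_Ico.mp j.2).2

open MeasureTheory ProbabilityTheory

lemma faultInd_eq {Ω : Type*} (U : ℕ → Ω → ℝ) (R : ℕ) (i : ℕ) (ω : Ω) :
    faultInd U R i ω = U i ω * ∏ j ∈ Finset.Ico (max 1 (i + 1 - R)) i, (1 - faultInd U R j ω) := by
  rw [faultInd, ← Finset.prod_attach (Finset.Ico (max 1 (i + 1 - R)) i) (fun j => (1 - faultInd U R j ω))]

lemma prod_mem01 {α : Type*} (s : Finset α) (f : α → ℝ) (h : ∀ x ∈ s, f x = 0 ∨ f x = 1) :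
    (∏ x ∈ s, f x) = 0 ∨ (∏ x ∈ s, f x) = 1 := by
  refine Finset.prod_induction f (fun y => y = 0 ∨ y = 1) ?_ (Or.inr rfl) h
  rintro a b (rfl|rfl) (rfl|rfl) <;> simp

lemma one_sub_sum_le_prod {α : Type*} (s : Finset α) (f : α → ℝ)
    (h0 : ∀ x ∈ s, 0 ≤ f x) (h1 : ∀ x ∈ s, f x ≤ 1) :
    1 - ∑ x ∈ s, f x ≤ ∏ x ∈ s, (1 - f x) := by
  classical
  induction s using Finset.induction with
  | empty => simp
  | @insert a s ha ih =>
    rw [Finset.sum_insert ha, Finset.prod_insert ha]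
    have h0a := h0 a (Finset.mem_insert_self a s)
    have h1a := h1 a (Finset.mem_insert_self a s)
    have ih' := ih (fun x hx => h0 x (Finset.mem_insert_of_mem hx))
      (fun x hx => h1 x (Finset.mem_insert_of_mem hx))
    have hs : 0 ≤ ∑ x ∈ s, f x := Finset.sum_nonneg (fun x hx => h0 x (Finset.mem_insert_of_mem hx))
    nlinarith

section
variable {Ω : Type*} {U : ℕ → Ω → ℝ} {R N : ℕ}

lemma faultInd_mem01 (hval : ∀ i ∈ Finset.Icc 1 N, ∀ ω, U i ω = 0 ∨ U i ω = 1) :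
    ∀ i, 1 ≤ i → i ≤ N → ∀ ω, faultInd U R i ω = 0 ∨ faultInd U R i ω = 1 := by
  intro i
  induction i using Nat.strong_induction_on with
  | _ i ih =>
    intro h1 h2 ω
    rw [faultInd_eq]
    have hU := hval i (Finset.mem_Icc.mpr ⟨h1, h2⟩) ω
    have hprod := prod_mem01 (Finset.Ico (max 1 (i + 1 - R)) i)
      (fun j => 1 - faultInd U R j ω) ?_
    · rcases hU with h | h <;> rcases hprod with h' | h' <;> simp [h, h']
    · intro j hj
      obtain ⟨hj1, hj2⟩ := Finset.mem_Ico.mp hj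
      have h1j : 1 ≤ j := le_trans (le_max_left 1 _) hj1
      rcases ih j hj2 h1j (le_trans (Nat.le_of_lt hj2) h2) ω with h | h <;> simp [h]

lemma faultInd_nonneg (hval : ∀ i ∈ Finset.Icc 1 N, ∀ ω, U i ω = 0 ∨ U i ω = 1)
    {i : ℕ} (h1 : 1 ≤ i) (h2 : i ≤ N) (ω : Ω) : 0 ≤ faultInd U R i ω := by
  rcases faultInd_mem01 (R := R) hval i h1 h2 ω with h | h <;> simp [h]

lemma faultInd_le_one (hval : ∀ i ∈ Finset.Icc 1 N, ∀ ω, U i ω = 0 ∨ U i ω = 1)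
    {i : ℕ} (h1 : 1 ≤ i) (h2 : i ≤ N) (ω : Ω) : faultInd U R i ω ≤ 1 := by
  rcases faultInd_mem01 (R := R) hval i h1 h2 ω with h | h <;> simp [h]

lemma faultInd_le_U (hval : ∀ i ∈ Finset.Icc 1 N, ∀ ω, U i ω = 0 ∨ U i ω = 1)
    {i : ℕ} (h1 : 1 ≤ i) (h2 : i ≤ N) (ω : Ω) : faultInd U R i ω ≤ U i ω := by
  rw [faultInd_eq]
  have hU := hval i (Finset.mem_Icc.mpr ⟨h1, h2⟩) ω
  have hprod := prod_mem01 (Finset.Ico (max 1 (i + 1 - R)) i)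
    (fun j => 1 - faultInd U R j ω) ?_
  · rcases hU with h | h <;> rcases hprod with h' | h' <;> simp [h, h']
  · intro j hj
    obtain ⟨hj1, hj2⟩ := Finset.mem_Ico.mp hj
    have h1j : 1 ≤ j := le_trans (le_max_left 1 _) hj1
    rcases faultInd_mem01 (R := R) hval j h1j (le_trans (Nat.le_of_lt hj2) h2) ω with h | h <;> simp [h]

lemma faultInd_lower (hval : ∀ i ∈ Finset.Icc 1 N, ∀ ω, U i ω = 0 ∨ U i ω = 1)
    {i : ℕ} (h1 : 1 ≤ i) (h2 : i ≤ N) (ω : Ω) :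
    U i ω - ∑ j ∈ Finset.Ico (max 1 (i + 1 - R)) i, U i ω * U j ω ≤ faultInd U R i ω := by
  rw [faultInd_eq]
  have hU := hval i (Finset.mem_Icc.mpr ⟨h1, h2⟩) ω
  have hUnn : 0 ≤ U i ω := by rcases hU with h | h <;> simp [h]
  have hbnd : ∀ j ∈ Finset.Ico (max 1 (i + 1 - R)) i,
      1 ≤ j ∧ j ≤ N := by
    intro j hj
    obtain ⟨hj1, hj2⟩ := Finset.mem_Ico.mp hj
    exact ⟨le_trans (le_max_left 1 _) hj1, le_trans (Nat.le_of_lt hj2) h2⟩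
  have hP : 1 - ∑ j ∈ Finset.Ico (max 1 (i + 1 - R)) i, faultInd U R j ω ≤
      ∏ j ∈ Finset.Ico (max 1 (i + 1 - R)) i, (1 - faultInd U R j ω) :=
    one_sub_sum_le_prod _ _ (fun j hj => faultInd_nonneg (R := R) hval (hbnd j hj).1 (hbnd j hj).2 ω)
      (fun j hj => faultInd_le_one (R := R) hval (hbnd j hj).1 (hbnd j hj).2 ω)
  have hsum : ∑ j ∈ Finset.Ico (max 1 (i + 1 - R)) i, faultInd U R j ω ≤
      ∑ j ∈ Finset.Ico (max 1 (i + 1 - R)) i, U j ω :=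
    Finset.sum_le_sum (fun j hj => faultInd_le_U (R := R) hval (hbnd j hj).1 (hbnd j hj).2 ω)
  calc U i ω - ∑ j ∈ Finset.Ico (max 1 (i + 1 - R)) i, U i ω * U j ω
      = U i ω * (1 - ∑ j ∈ Finset.Ico (max 1 (i + 1 - R)) i, U j ω) := by
        rw [mul_sub, mul_one, Finset.mul_sum]
    _ ≤ U i ω * ∏ j ∈ Finset.Ico (max 1 (i + 1 - R)) i, (1 - faultInd U R j ω) :=
        mul_le_mul_of_nonneg_left (le_trans (by linarith) hP) hUnn

lemma faultInd_mul_eq_zero (hval : ∀ i ∈ Finset.Icc 1 N, ∀ ω, U i ω = 0 ∨ U i ω = 1)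
    {i k : ℕ} (h1 : 1 ≤ i) (hik : i < k) (h2 : k ≤ N) (hkR : k < i + R) (ω : Ω) :
    faultInd U R i ω * faultInd U R k ω = 0 := by
  rcases faultInd_mem01 (R := R) hval i h1 (le_trans (Nat.le_of_lt hik) h2) ω with h | h
  · rw [h, zero_mul]
  · rw [faultInd_eq U R k ω]
    have hmem : i ∈ Finset.Ico (max 1 (k + 1 - R)) k := by
      rw [Finset.mem_Ico]
      constructor
      · exact max_le h1 (by omega)
      · exact hik
    rw [Finset.prod_eq_zero hmem (by rw [h]; ring), mul_zero, mul_zero]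

lemma faultInd_measurable [MeasurableSpace Ω] (hmeas : ∀ i ∈ Finset.Icc 1 N, Measurable (U i)) :
    ∀ i, 1 ≤ i → i ≤ N → Measurable (faultInd U R i) := by
  intro i
  induction i using Nat.strong_induction_on with
  | _ i ih =>
    intro h1 h2
    have heq : faultInd U R i = fun ω => U i ω *
        ∏ j ∈ Finset.Ico (max 1 (i + 1 - R)) i, (1 - faultInd U R j ω) :=
      funext (faultInd_eq U R i)
    rw [heq]
    refine (hmeas i (Finset.mem_Icc.mpr ⟨h1, h2⟩)).mul ?_
    refine Finset.measurable_prod _ (fun j hj => ?_)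
    obtain ⟨hj1, hj2⟩ := Finset.mem_Ico.mp hj
    exact measurable_const.sub
      (ih j hj2 (le_trans (le_max_left 1 _) hj1) (le_trans (Nat.le_of_lt hj2) h2))

end

open MeasureTheory ProbabilityTheory

variable {Ω : Type} [MeasurableSpace Ω] {μ : Measure Ω} [IsProbabilityMeasure μ]

lemma integrable_of_bdd {f : Ω → ℝ} (hf : Measurable f) {C : ℝ} (h : ∀ ω, |f ω| ≤ C) :
    Integrable f μ :=
  (integrable_const C).mono' hf.aestronglyMeasurable (Filter.Eventually.of_forall h)

lemma integral_eq_p {f : Ω → ℝ} (hf : Measurable f) (hval : ∀ ω, f ω = 0 ∨ f ω = 1)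
    {p : ℝ} (hp : 0 ≤ p) (hprob : μ {ω | f ω = 1} = ENNReal.ofReal p) :
    ∫ ω, f ω ∂μ = p := by
  have hms : MeasurableSet {ω | f ω = 1} := hf (measurableSet_singleton 1)
  have heq : f = Set.indicator {ω | f ω = 1} (fun _ => (1:ℝ)) := by
    funext ω
    rcases hval ω with h | h
    · rw [h, Set.indicator_of_notMem]
      simp [h]
    · rw [h, Set.indicator_of_mem]
      exact h
  rw [heq]
  rw [MeasureTheory.integral_indicator_const (1:ℝ) hms, measureReal_def, hprob, ENNReal.toReal_ofReal hp,
    smul_eq_mul, mul_one]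
lemma truncPoisson_mem01 {lam : ℝ} (hlam : 0 ≤ lam) (n : ℕ) :
    0 ≤ truncPoissonPmf lam n 0 ∧ truncPoissonPmf lam n 0 ≤ 1 := by
  have hnn : ∀ j, 0 ≤ poissonPmf lam j := by
    intro j
    unfold poissonPmf
    positivity
  have hmem : (0:ℕ) ∈ Finset.range (n + 1) := Finset.mem_range.mpr (Nat.succ_pos n)
  have hle : poissonPmf lam 0 ≤ ∑ j ∈ Finset.range (n + 1), poissonPmf lam j :=
    Finset.single_le_sum (fun j _ => hnn j) hmem
  have hpos : 0 < poissonPmf lam 0 := by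
    unfold poissonPmf
    simp [Real.exp_pos]
  constructor
  · exact div_nonneg (hnn 0) (le_trans hpos.le hle)
  · exact div_le_one_of_le₀ hle (le_trans hpos.le hle)

/-- In the machine-fault model with fixed `N ≥ 1` and `R ≥ 1`, `Var W / λ = 1 + O(p)`
as `p → 0`: there are `K > 0` and `p₀ > 0` such that for all `0 < p < p₀` and every
realization of the model, `|1 - Var W / λ| ≤ K p`; consequently the truncated Poisson
error bound `(1 - π₀)(1 - Var W / λ)` is of order `p`. -/
theorem machineFault_bound_order_p (N R : ℕ) (hN : 1 ≤ N) (hR : 1 ≤ R) :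
    ∃ K > (0 : ℝ), ∃ p₀ > (0 : ℝ), ∀ p : ℝ, 0 < p → p < p₀ →
      ∀ (Ω : Type) [MeasurableSpace Ω] (μ : Measure Ω) [IsProbabilityMeasure μ]
        (U : ℕ → Ω → ℝ),
        (∀ i ∈ Finset.Icc 1 N, Measurable (U i)) →
        (∀ i ∈ Finset.Icc 1 N, ∀ ω, U i ω = 0 ∨ U i ω = 1) →
        (∀ i ∈ Finset.Icc 1 N, μ {ω | U i ω = 1} = ENNReal.ofReal p) →
        iIndepFun (fun i : Fin N => U ((i : ℕ) + 1)) μ →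
        ∀ (W : Ω → ℝ), W = (fun ω => ∑ i ∈ Finset.Icc 1 N, faultInd U R i ω) →
        ∀ (lam : ℝ), lam = ∫ ω, W ω ∂μ →
        |1 - variance W μ / lam| ≤ K * p ∧
        |(1 - truncPoissonPmf lam (N / R + 1) 0) * (1 - variance W μ / lam)| ≤ K * p := by
  refine ⟨2 * N, by positivity, 1 / (2 * R), by positivity, ?_⟩
  intro p hp hpp₀ Ω _ μ _ U hmeas hval hprob hindep W hW lam hlam
  set S : Finset ℕ := Finset.Icc 1 N with hS
  have hmemS : ∀ i ∈ S, 1 ≤ i ∧ i ≤ N := fun i hi => Finset.mem_Icc.mp hi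
  have hcardS : (S.card : ℝ) = N := by
    rw [hS, Nat.card_Icc]; norm_num
  have hRp : R * p < 1 / 2 := by
    have hR0 : (0:ℝ) < R := by positivity
    calc (R:ℝ) * p < R * (1 / (2 * R)) := mul_lt_mul_of_pos_left hpp₀ hR0
    _ = 1 / 2 := by field_simp
  -- measurability / integrability
  have hImeas : ∀ i ∈ S, Measurable (faultInd U R i) := fun i hi =>
    faultInd_measurable hmeas i (hmemS i hi).1 (hmemS i hi).2
  have hIbd : ∀ i ∈ S, ∀ ω, |faultInd U R i ω| ≤ 1 := by
    intro i hi ω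
    rcases faultInd_mem01 (R := R) hval i (hmemS i hi).1 (hmemS i hi).2 ω with h | h <;>
      simp [h]
  have hIint : ∀ i ∈ S, Integrable (faultInd U R i) μ := fun i hi =>
    integrable_of_bdd (hImeas i hi) (hIbd i hi)
  have hUbd : ∀ i ∈ S, ∀ ω, |U i ω| ≤ 1 := by
    intro i hi ω
    rcases hval i hi ω with h | h <;> simp [h]
  have hUint : ∀ i ∈ S, Integrable (U i) μ := fun i hi =>
    integrable_of_bdd (hmeas i hi) (hUbd i hi)
  have hUintval : ∀ i ∈ S, ∫ ω, U i ω ∂μ = p := fun i hi =>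
    integral_eq_p (hmeas i hi) (hval i hi) hp.le (hprob i hi)
  -- independence products
  have hUUint : ∀ i ∈ S, ∀ j ∈ S, Integrable (fun ω => U i ω * U j ω) μ := by
    intro i hi j hj
    refine integrable_of_bdd ((hmeas i hi).mul (hmeas j hj)) (C := 1) ?_
    intro ω
    rw [abs_mul]
    calc |U i ω| * |U j ω| ≤ 1 * 1 :=
      mul_le_mul (hUbd i hi ω) (hUbd j hj ω) (abs_nonneg _) zero_le_one
    _ = 1 := mul_one 1
  have hmul : ∀ i ∈ S, ∀ j ∈ S, i ≠ j → ∫ ω, U i ω * U j ω ∂μ = p * p := by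
    intro i hi j hj hij
    obtain ⟨hi1, hi2⟩ := hmemS i hi
    obtain ⟨hj1, hj2⟩ := hmemS j hj
    have hifin : i - 1 < N := by omega
    have hjfin : j - 1 < N := by omega
    have hne : (⟨i - 1, hifin⟩ : Fin N) ≠ ⟨j - 1, hjfin⟩ := by
      intro hcon
      apply hij
      have := Fin.mk.injEq (i - 1) hifin (j - 1) hjfin ▸ hcon
      omega
    have hIF : IndepFun (U ((i - 1) + 1)) (U ((j - 1) + 1)) μ :=
      hindep.indepFun hne
    have hi' : (i - 1) + 1 = i := by omega
    have hj' : (j - 1) + 1 = j := by omega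
    rw [hi', hj'] at hIF
    have := IndepFun.integral_mul_eq_mul_integral hIF (hUint i hi).aestronglyMeasurable (hUint j hj).aestronglyMeasurable
    rw [show (U i * U j) = fun ω => U i ω * U j ω from rfl] at this
    rw [this, hUintval i hi, hUintval j hj]
  -- bounds on ∫ I i
  have hIle : ∀ i ∈ S, ∫ ω, faultInd U R i ω ∂μ ≤ p := by
    intro i hi
    calc ∫ ω, faultInd U R i ω ∂μ ≤ ∫ ω, U i ω ∂μ := by
            exact integral_mono (hIint i hi) (hUint i hi)
              (fun ω => faultInd_le_U (R := R) hval (hmemS i hi).1 (hmemS i hi).2 ω)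
    _ = p := hUintval i hi
  have hInn : ∀ i ∈ S, 0 ≤ ∫ ω, faultInd U R i ω ∂μ := fun i hi =>
    integral_nonneg (fun ω => faultInd_nonneg (R := R) hval (hmemS i hi).1 (hmemS i hi).2 ω)
  have hwsub : ∀ i ∈ S, ∀ j ∈ Finset.Ico (max 1 (i + 1 - R)) i, j ∈ S ∧ j ≠ i := by
    intro i hi j hj
    obtain ⟨hj1, hj2⟩ := Finset.mem_Ico.mp hj
    have h1j : 1 ≤ j := le_trans (le_max_left 1 _) hj1
    exact ⟨Finset.mem_Icc.mpr ⟨h1j, le_trans (Nat.le_of_lt hj2) (hmemS i hi).2⟩,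
      Nat.ne_of_lt hj2⟩
  have hcardw : ∀ i : ℕ, ((Finset.Ico (max 1 (i + 1 - R)) i).card : ℝ) ≤ R := by
    intro i
    rw [Nat.card_Ico]
    have : i - max 1 (i + 1 - R) ≤ R := by omega
    exact_mod_cast this
  have hIge : ∀ i ∈ S, p - R * p ^ 2 ≤ ∫ ω, faultInd U R i ω ∂μ := by
    intro i hi
    have hint2 : Integrable (fun ω => U i ω -
        ∑ j ∈ Finset.Ico (max 1 (i + 1 - R)) i, U i ω * U j ω) μ := by
      refine (hUint i hi).sub (integrable_finset_sum _ (fun j hj => ?_))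
      exact hUUint i hi j (hwsub i hi j hj).1
    have hstep : ∫ ω, (U i ω -
        ∑ j ∈ Finset.Ico (max 1 (i + 1 - R)) i, U i ω * U j ω) ∂μ ≤
        ∫ ω, faultInd U R i ω ∂μ :=
      integral_mono hint2 (hIint i hi)
        (fun ω => faultInd_lower (R := R) hval (hmemS i hi).1 (hmemS i hi).2 ω)
    have hcomp : ∫ ω, (U i ω -
        ∑ j ∈ Finset.Ico (max 1 (i + 1 - R)) i, U i ω * U j ω) ∂μ =
        p - (Finset.Ico (max 1 (i + 1 - R)) i).card * (p * p) := by
      rw [integral_sub (hUint i hi)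
        (integrable_finset_sum _ (fun j hj => hUUint i hi j (hwsub i hi j hj).1)),
        integral_finset_sum _ (fun j hj => hUUint i hi j (hwsub i hi j hj).1),
        hUintval i hi]
      congr 1
      rw [Finset.sum_congr rfl (fun j hj => hmul i hi j (hwsub i hi j hj).1
        (Ne.symm (hwsub i hi j hj).2)), Finset.sum_const, nsmul_eq_mul]
    rw [hcomp] at hstep
    refine le_trans ?_ hstep
    have := hcardw i
    nlinarith [sq_nonneg p, hp.le]
  -- lambda bounds
  have hlam_sum : lam = ∑ i ∈ S, ∫ ω, faultInd U R i ω ∂μ := by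
    rw [hlam, hW, integral_finset_sum _ (fun i hi => hIint i hi)]
  have hlam_le : lam ≤ N * p := by
    rw [hlam_sum]
    calc ∑ i ∈ S, ∫ ω, faultInd U R i ω ∂μ ≤ ∑ i ∈ S, p := Finset.sum_le_sum hIle
    _ = N * p := by rw [Finset.sum_const, nsmul_eq_mul, hcardS]
  have hlam_ge : N * (p - R * p ^ 2) ≤ lam := by
    rw [hlam_sum]
    calc (N : ℝ) * (p - R * p ^ 2) = ∑ i ∈ S, (p - R * p ^ 2) := by
            rw [Finset.sum_const, nsmul_eq_mul, hcardS]
    _ ≤ ∑ i ∈ S, ∫ ω, faultInd U R i ω ∂μ := Finset.sum_le_sum hIge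
  have hlam_half : N * p / 2 ≤ lam := by
    refine le_trans ?_ hlam_ge
    have hN1 : (1:ℝ) ≤ N := by exact_mod_cast hN
    have h2 : (R:ℝ) * p ^ 2 ≤ p / 2 := by nlinarith
    nlinarith [mul_le_mul_of_nonneg_left h2 (le_trans zero_le_one hN1)]
  have hlam_pos : 0 < lam := lt_of_lt_of_le (by positivity) hlam_half
  -- second moment
  have hIIint : ∀ i ∈ S, ∀ k ∈ S, Integrable (fun ω => faultInd U R i ω * faultInd U R k ω) μ := by
    intro i hi k hk
    refine integrable_of_bdd ((hImeas i hi).mul (hImeas k hk)) (C := 1) ?_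
    intro ω
    rw [abs_mul]
    calc |faultInd U R i ω| * |faultInd U R k ω| ≤ 1 * 1 :=
      mul_le_mul (hIbd i hi ω) (hIbd k hk ω) (abs_nonneg _) zero_le_one
    _ = 1 := mul_one 1
  have hIInn : ∀ i ∈ S, ∀ k ∈ S, 0 ≤ ∫ ω, faultInd U R i ω * faultInd U R k ω ∂μ := by
    intro i hi k hk
    refine integral_nonneg (fun ω => mul_nonneg ?_ ?_)
    · exact faultInd_nonneg (R := R) hval (hmemS i hi).1 (hmemS i hi).2 ω
    · exact faultInd_nonneg (R := R) hval (hmemS k hk).1 (hmemS k hk).2 ω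
  have hIIle : ∀ i ∈ S, ∀ k ∈ S, i ≠ k →
      ∫ ω, faultInd U R i ω * faultInd U R k ω ∂μ ≤ p * p := by
    intro i hi k hk hik
    calc ∫ ω, faultInd U R i ω * faultInd U R k ω ∂μ ≤ ∫ ω, U i ω * U k ω ∂μ := by
          refine integral_mono (hIIint i hi k hk) (hUUint i hi k hk) (fun ω => ?_)
          refine mul_le_mul (faultInd_le_U (R := R) hval (hmemS i hi).1 (hmemS i hi).2 ω)
            (faultInd_le_U (R := R) hval (hmemS k hk).1 (hmemS k hk).2 ω)
            (faultInd_nonneg (R := R) hval (hmemS k hk).1 (hmemS k hk).2 ω) ?_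
          have := hUbd i hi ω
          have := faultInd_nonneg (R := R) hval (hmemS i hi).1 (hmemS i hi).2 ω
          have := faultInd_le_U (R := R) hval (hmemS i hi).1 (hmemS i hi).2 ω
          linarith
      _ = p * p := hmul i hi k hk hik
  have hIIdiag : ∀ i ∈ S, ∫ ω, faultInd U R i ω * faultInd U R i ω ∂μ =
      ∫ ω, faultInd U R i ω ∂μ := by
    intro i hi
    congr 1
    funext ω
    rcases faultInd_mem01 (R := R) hval i (hmemS i hi).1 (hmemS i hi).2 ω with h | h <;>
      rw [h] <;> ring
  set D : ℝ := ∑ i ∈ S, ∑ k ∈ S.erase i, ∫ ω, faultInd U R i ω * faultInd U R k ω ∂μ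
    with hD
  have hDnn : 0 ≤ D := by
    refine Finset.sum_nonneg (fun i hi => Finset.sum_nonneg (fun k hk => ?_))
    exact hIInn i hi k (Finset.mem_of_mem_erase hk)
  have hDle : D ≤ N * N * (p * p) := by
    rw [hD]
    calc ∑ i ∈ S, ∑ k ∈ S.erase i, ∫ ω, faultInd U R i ω * faultInd U R k ω ∂μ
        ≤ ∑ i ∈ S, ∑ k ∈ S, (p * p) := by
            refine Finset.sum_le_sum (fun i hi => ?_)
            calc ∑ k ∈ S.erase i, ∫ ω, faultInd U R i ω * faultInd U R k ω ∂μ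
                ≤ ∑ k ∈ S.erase i, (p * p) := by
                  refine Finset.sum_le_sum (fun k hk => ?_)
                  exact hIIle i hi k (Finset.mem_of_mem_erase hk)
                    (Ne.symm (Finset.ne_of_mem_erase hk))
              _ ≤ ∑ k ∈ S, (p * p) := by
                  refine Finset.sum_le_sum_of_subset_of_nonneg (Finset.erase_subset i S) ?_
                  intro k _ _
                  positivity
      _ = N * N * (p * p) := by
          rw [Finset.sum_const, Finset.sum_const, nsmul_eq_mul, nsmul_eq_mul, hcardS]
          ring
  have hW2 : ∫ ω, W ω ^ 2 ∂μ = lam + D := by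
    have hpt : ∀ ω, W ω ^ 2 = ∑ i ∈ S, ∑ k ∈ S, faultInd U R i ω * faultInd U R k ω := by
      intro ω
      rw [hW]
      rw [sq, Finset.sum_mul_sum]
    calc ∫ ω, W ω ^ 2 ∂μ
        = ∫ ω, ∑ i ∈ S, ∑ k ∈ S, faultInd U R i ω * faultInd U R k ω ∂μ := by
          congr 1
          funext ω
          exact hpt ω
      _ = ∑ i ∈ S, ∑ k ∈ S, ∫ ω, faultInd U R i ω * faultInd U R k ω ∂μ := by
          rw [integral_finset_sum _ (fun i hi =>
            integrable_finset_sum _ (fun k hk => hIIint i hi k hk))]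
          exact Finset.sum_congr rfl (fun i hi =>
            integral_finset_sum _ (fun k hk => hIIint i hi k hk))
      _ = ∑ i ∈ S, (∫ ω, faultInd U R i ω ∂μ +
            ∑ k ∈ S.erase i, ∫ ω, faultInd U R i ω * faultInd U R k ω ∂μ) := by
          refine Finset.sum_congr rfl (fun i hi => ?_)
          rw [← Finset.add_sum_erase S _ hi, hIIdiag i hi]
      _ = lam + D := by
          rw [Finset.sum_add_distrib, ← hlam_sum, hD]
  -- variance
  have hWmeas : Measurable W := by
    rw [hW]
    exact Finset.measurable_sum _ (fun i hi => hImeas i hi)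
  have hWbd : ∀ ω, ‖W ω‖ ≤ N := by
    intro ω
    rw [hW, Real.norm_eq_abs]
    calc |∑ i ∈ S, faultInd U R i ω| ≤ ∑ i ∈ S, |faultInd U R i ω| :=
      Finset.abs_sum_le_sum_abs _ _
    _ ≤ ∑ i ∈ S, 1 := Finset.sum_le_sum (fun i hi => hIbd i hi ω)
    _ = N := by rw [Finset.sum_const, nsmul_eq_mul, hcardS, mul_one]
  have hWmem : MemLp W 2 μ :=
    MemLp.of_bound hWmeas.aestronglyMeasurable N (Filter.Eventually.of_forall hWbd)
  have hvar : variance W μ = (lam + D) - lam ^ 2 := by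
    have hint : μ[W ^ 2] = lam + D := by
      rw [← hW2]
      rfl
    rw [variance_eq_sub hWmem, hint, ← hlam]
  -- conclude first bound
  have hNp : (0:ℝ) < N := by positivity
  have habs : |lam - variance W μ| ≤ N * N * (p * p) := by
    rw [hvar]
    have hlamsq : lam ^ 2 ≤ N * N * (p * p) := by nlinarith
    rw [abs_le]
    constructor <;> nlinarith
  have hfirst : |1 - variance W μ / lam| ≤ 2 * N * p := by
    have h1 : 1 - variance W μ / lam = (lam - variance W μ) / lam := by
      field_simp
    rw [h1, abs_div, abs_of_pos hlam_pos, div_le_iff₀ hlam_pos]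
    calc |lam - variance W μ| ≤ N * N * (p * p) := habs
    _ ≤ 2 * N * p * (N * p / 2) := le_of_eq (by ring)
    _ ≤ 2 * N * p * lam := by
        refine mul_le_mul_of_nonneg_left hlam_half (by positivity)
  refine ⟨hfirst, ?_⟩
  obtain ⟨hπ0, hπ1⟩ := truncPoisson_mem01 hlam_pos.le (N / R + 1)
  rw [abs_mul]
  calc |1 - truncPoissonPmf lam (N / R + 1) 0| * |1 - variance W μ / lam|
      ≤ 1 * (2 * N * p) := by
        refine mul_le_mul ?_ hfirst (abs_nonneg _) zero_le_one
        rw [abs_le]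
        constructor <;> linarith
    _ = 2 * N * p := one_mul _
end
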